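/- arXiv:1401.3814 — 4 statements merged into one kernel-verified Lean document; each statement's English description precedes it below -/
import Mathlib

section
/- Let W_θ be a one-parameter exponential family of transition matrices with potential function φ and stationary distribution P¹_θ. Then the derivative of the potential equals the stationary expectation of the generator: φ'(θ) = Σ_{x,x'} P¹_θ(x')·W_θ(x|x')·g(x,x'). -/
open Matrix Real

/-- A (column-)transition matrix: nonnegative entries, each column sums to 1. -/
def IsTransition {X : Type*} [Fintype X] (W : Matrix X X ℝ) : Prop :=
  (∀ x x', 0 ≤ W x x') ∧ ∀ x', ∑ x, W x x' = 1

/-- Irreducibility: some power has a positive entry for every pair. -/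
def IsIrred {X : Type*} [Fintype X] [DecidableEq X] (W : Matrix X X ℝ) : Prop :=
  ∀ x x', ∃ n : ℕ, 0 < (W ^ n) x x'

/-- `r` is the Perron–Frobenius eigenvalue of `M`: it is positive and has a
strictly positive (right) eigenvector. For irreducible nonnegative matrices this
characterizes the Perron–Frobenius eigenvalue uniquely. -/
def IsPerron {X : Type*} [Fintype X] (M : Matrix X X ℝ) (r : ℝ) : Prop :=
  0 < r ∧ ∃ v : X → ℝ, (∀ x, 0 < v x) ∧ M *ᵥ v = r • v


/-- The tilted matrix `W̄_θ(x|x') = W(x|x')·e^{θ g(x,x')}`. -/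
noncomputable def tilted {X : Type*} [Fintype X] (W : Matrix X X ℝ) (g : X → X → ℝ) (θ : ℝ) :
    Matrix X X ℝ :=
  Matrix.of fun x x' => W x x' * Real.exp (θ * g x x')

/-- The exponential family of transition matrices
`W_θ(x|x') = λ_θ⁻¹ · v_θ(x) · W̄_θ(x|x') · v_θ(x')⁻¹`, with `λ_θ = e^{φ(θ)}` the
Perron–Frobenius eigenvalue and `v_θ` the Perron eigenvector of `W̄_θᵀ`. -/
noncomputable def expFam {X : Type*} [Fintype X] (W : Matrix X X ℝ) (g : X → X → ℝ)
    (φ : ℝ → ℝ) (v : ℝ → X → ℝ) (θ : ℝ) : Matrix X X ℝ :=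
  Matrix.of fun x x' =>
    (Real.exp (φ θ))⁻¹ * v θ x * (W x x' * Real.exp (θ * g x x')) * (v θ x')⁻¹

/-- `φ` and `v` constitute the Perron data of the family of tilted matrices:
`v_θ` is a positive eigenvector of `W̄_θᵀ` with eigenvalue `e^{φ(θ)}`. -/
def IsPerronData {X : Type*} [Fintype X] (W : Matrix X X ℝ) (g : X → X → ℝ)
    (φ : ℝ → ℝ) (v : ℝ → X → ℝ) : Prop :=
  ∀ θ : ℝ, (∀ x, 0 < v θ x) ∧ (tilted W g θ)ᵀ *ᵥ v θ = Real.exp (φ θ) • v θ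

/-- `P` is a stationary distribution of the transition matrix `M`. -/
def IsStationaryDistrib {X : Type*} [Fintype X] (M : Matrix X X ℝ) (P : X → ℝ) : Prop :=
  (∀ x, 0 ≤ P x) ∧ (∑ x, P x = 1) ∧ M *ᵥ P = P

/-- the derivative of the potential function equals the stationary
expectation of the generator:
`φ'(θ) = Σ_{x,x'} P¹_θ(x')·W_θ(x|x')·g(x,x')`. -/
theorem deriv_potential_eq_expectation {X : Type*} [Fintype X] [DecidableEq X]
    (W : Matrix X X ℝ) (g : X → X → ℝ)
    (hW : IsTransition W) (hirr : IsIrred W)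
    (φ : ℝ → ℝ) (v : ℝ → X → ℝ) (hPD : IsPerronData W g φ v)
    (P1 : ℝ → X → ℝ) (hstat : ∀ θ : ℝ, IsStationaryDistrib (expFam W g φ v θ) (P1 θ))
    (θ : ℝ) (hφdiff : DifferentiableAt ℝ φ θ) :
    deriv φ θ = ∑ x, ∑ x', P1 θ x' * expFam W g φ v θ x x' * g x x' := by

  classical
  have hvpos : ∀ σ x, 0 < v σ x := fun σ => (hPD σ).1
  set M : ℝ → Matrix X X ℝ := expFam W g φ v with hM
  have hcol : ∀ σ x', ∑ x, M σ x x' = 1 := by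
    intro σ x'
    have he : ∑ x, W x x' * Real.exp (σ * g x x') * v σ x = Real.exp (φ σ) * v σ x' := by
      have h := congrFun (hPD σ).2 x'
      simpa [Matrix.mulVec, dotProduct, tilted, Matrix.transpose_apply] using h
    have h1 : ∑ x, M σ x x' =
        (Real.exp (φ σ))⁻¹ * (v σ x')⁻¹ *
          ∑ x, W x x' * Real.exp (σ * g x x') * v σ x := by
      rw [Finset.mul_sum]
      refine Finset.sum_congr rfl fun x _ => ?_
      simp only [hM, expFam, Matrix.of_apply]
      ring
    rw [h1, he]
    field_simp
    exact div_self (hvpos σ x').ne'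
  have hMnn : ∀ σ x x', 0 ≤ M σ x x' := by
    intro σ x x'
    have hw := hW.1 x x'
    have h1 := hvpos σ x
    have h2 := hvpos σ x'
    simp only [hM, expFam, Matrix.of_apply]
    exact mul_nonneg (mul_nonneg (mul_nonneg (inv_nonneg.2 (Real.exp_pos _).le) h1.le)
      (mul_nonneg hw (Real.exp_pos _).le)) (inv_nonneg.2 h2.le)
  obtain ⟨hPnn, hPsum, hPstat⟩ := hstat θ
  have hProw : ∀ x, ∑ x', M θ x x' * P1 θ x' = P1 θ x := by
    intro x
    have h := congrFun hPstat x
    simpa [Matrix.mulVec, dotProduct] using h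
  set E := ∑ x, ∑ x', P1 θ x' * M θ x x' * g x x' with hE
  have hrow : ∀ x, ∑ x', P1 θ x' * M θ x x' = P1 θ x := by
    intro x
    rw [← hProw x]
    exact Finset.sum_congr rfl fun x' _ => mul_comm _ _
  have hcolQ : ∀ x', ∑ x, P1 θ x' * M θ x x' = P1 θ x' := by
    intro x'
    rw [← Finset.mul_sum, hcol, mul_one]
  have key : ∀ σ : ℝ, φ θ + (σ - θ) * E ≤ φ σ := by
    intro σ
    set f : X → ℝ := fun x => Real.log (v σ x) - Real.log (v θ x) with hf
    set B : X → X → ℝ := fun x x' => (φ θ - φ σ) + f x - f x' + (σ - θ) * g x x' with hB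
    have hterm : ∀ x x', P1 θ x' * M θ x x' * B x x' ≤
        P1 θ x' * M σ x x' - P1 θ x' * M θ x x' := by
      intro x x'
      rcases eq_or_lt_of_le (hW.1 x x') with hw | hw
      · have h0 : ∀ τ : ℝ, M τ x x' = 0 := by
          intro τ
          simp [hM, expFam, ← hw]
        simp [h0]
      · have hMσeq : M σ x x' = M θ x x' * Real.exp (B x x') := by
          have hexpg : Real.exp (θ * g x x') * Real.exp ((σ - θ) * g x x')
              = Real.exp (σ * g x x') := by
            rw [← Real.exp_add]; ring_nf
          have hBexp : Real.exp (B x x') = Real.exp (φ θ) / Real.exp (φ σ)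
              * (v σ x / v θ x) / (v σ x' / v θ x') * Real.exp ((σ - θ) * g x x') := by
            simp only [hB, hf, Real.exp_add, Real.exp_sub,
              Real.exp_log (hvpos σ x), Real.exp_log (hvpos θ x),
              Real.exp_log (hvpos σ x'), Real.exp_log (hvpos θ x')]
          simp only [hM, expFam, Matrix.of_apply]
          rw [hBexp]
          have e1 : Real.exp (φ σ) ≠ 0 := (Real.exp_pos _).ne'
          have e2 : Real.exp (φ θ) ≠ 0 := (Real.exp_pos _).ne'
          have e3 : (v σ x) ≠ 0 := (hvpos σ x).ne'
          have e4 : (v θ x) ≠ 0 := (hvpos θ x).ne'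
          have e5 : (v σ x') ≠ 0 := (hvpos σ x').ne'
          have e6 : (v θ x') ≠ 0 := (hvpos θ x').ne'
          field_simp
          rw [← hexpg]
          ring
        have hQnn : 0 ≤ P1 θ x' * M θ x x' := mul_nonneg (hPnn x') (hMnn θ x x')
        have hlog : B x x' ≤ Real.exp (B x x') - 1 := by
          have := Real.add_one_le_exp (B x x')
          linarith
        calc P1 θ x' * M θ x x' * B x x'
            ≤ P1 θ x' * M θ x x' * (Real.exp (B x x') - 1) :=
              mul_le_mul_of_nonneg_left hlog hQnn
          _ = P1 θ x' * (M θ x x' * Real.exp (B x x')) - P1 θ x' * M θ x x' := by ring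
          _ = P1 θ x' * M σ x x' - P1 θ x' * M θ x x' := by rw [← hMσeq]
    have hone : ∀ τ : ℝ, ∑ x, ∑ x', P1 θ x' * M τ x x' = 1 := by
      intro τ
      rw [Finset.sum_comm]
      have : ∀ x', ∑ x, P1 θ x' * M τ x x' = P1 θ x' := by
        intro x'
        rw [← Finset.mul_sum, hcol, mul_one]
      rw [Finset.sum_congr rfl fun x' _ => this x', hPsum]
    have hsum : ∑ x, ∑ x', P1 θ x' * M θ x x' * B x x' ≤ 0 := by
      have h1 : ∑ x, ∑ x', P1 θ x' * M θ x x' * B x x'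
          ≤ ∑ x, ∑ x', (P1 θ x' * M σ x x' - P1 θ x' * M θ x x') :=
        Finset.sum_le_sum fun x _ => Finset.sum_le_sum fun x' _ => hterm x x'
      have h2 : ∑ x, ∑ x', (P1 θ x' * M σ x x' - P1 θ x' * M θ x x') = (0:ℝ) := by
        simp only [Finset.sum_sub_distrib, hone σ, hone θ]
        ring
      linarith
    have hexpand : ∑ x, ∑ x', P1 θ x' * M θ x x' * B x x'
        = (φ θ - φ σ) + (σ - θ) * E := by
      have e1 : ∀ x x', P1 θ x' * M θ x x' * B x x'
          = (φ θ - φ σ) * (P1 θ x' * M θ x x') + f x * (P1 θ x' * M θ x x')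
            - f x' * (P1 θ x' * M θ x x')
            + (σ - θ) * (P1 θ x' * M θ x x' * g x x') := by
        intro x x'
        simp only [hB]
        ring
      have A1 : ∑ x, ∑ x', (φ θ - φ σ) * (P1 θ x' * M θ x x') = φ θ - φ σ := by
        simp only [← Finset.mul_sum]
        rw [Finset.sum_congr rfl fun x _ => hrow x, hPsum, mul_one]
      have A2 : ∑ x, ∑ x', f x * (P1 θ x' * M θ x x') = ∑ x, f x * P1 θ x := by
        refine Finset.sum_congr rfl fun x _ => ?_
        rw [← Finset.mul_sum, hrow x]
      have A3 : ∑ x, ∑ x', f x' * (P1 θ x' * M θ x x') = ∑ x, f x * P1 θ x := by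
        rw [Finset.sum_comm]
        refine Finset.sum_congr rfl fun x' _ => ?_
        rw [← Finset.mul_sum, hcolQ x']
      have A4 : ∑ x, ∑ x', (σ - θ) * (P1 θ x' * M θ x x' * g x x') = (σ - θ) * E := by
        rw [hE, Finset.mul_sum]
        exact Finset.sum_congr rfl fun x _ => (Finset.mul_sum _ _ _).symm
      calc ∑ x, ∑ x', P1 θ x' * M θ x x' * B x x'
          = ∑ x, ∑ x', ((φ θ - φ σ) * (P1 θ x' * M θ x x') + f x * (P1 θ x' * M θ x x')
            - f x' * (P1 θ x' * M θ x x')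
            + (σ - θ) * (P1 θ x' * M θ x x' * g x x')) :=
            Finset.sum_congr rfl fun x _ => Finset.sum_congr rfl fun x' _ => e1 x x'
        _ = (φ θ - φ σ) + (σ - θ) * E := by
            simp only [Finset.sum_add_distrib, Finset.sum_sub_distrib, A1, A2, A3, A4]
            ring
    rw [hexpand] at hsum
    linarith
  have hlindiff : DifferentiableAt ℝ (fun σ : ℝ => (σ - θ) * E) θ :=
    (differentiableAt_id.sub_const θ).mul_const E
  have hmin : IsLocalMin (fun σ : ℝ => φ σ - (σ - θ) * E) θ := by
    refine Filter.Eventually.of_forall fun σ => ?_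
    have := key σ
    simp only
    linarith
  have h0 := hmin.deriv_eq_zero
  have hd : deriv (fun σ : ℝ => φ σ - (σ - θ) * E) θ = deriv φ θ - E := by
    rw [deriv_fun_sub hφdiff hlindiff]
    congr 1
    have h : HasDerivAt (fun σ : ℝ => (σ - θ) * E) (1 * E) θ :=
      ((hasDerivAt_id θ).sub_const θ).mul_const E
    simpa using h.deriv
  rw [hd] at h0
  rw [hE] at h0
  linarith
end

section
/- The Fisher information J²_θ of the joint distribution family {W_θ × P¹_θ}_θ on X × X decomposes as J²_θ = φ''(θ) + J¹_θ, where J¹_θ is the Fisher information of the stationary distribution family {P¹_θ}_θ. -/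
open Matrix Real

/-- `P` is a stationary distribution of the transition matrix `M`. -/
def IsStationaryDistr {X : Type*} [Fintype X] (M : Matrix X X ℝ) (P : X → ℝ) : Prop :=
  (∀ x, 0 ≤ P x) ∧ (∑ x, P x = 1) ∧ M *ᵥ P = P

noncomputable def score {X : Type*} (g : X → X → ℝ) (φ : ℝ → ℝ) (v : ℝ → X → ℝ)
    (t : ℝ) (x x' : X) : ℝ :=
  g x x' - deriv φ t + deriv (fun s => v s x) t / v t x - deriv (fun s => v s x') t / v t x'

lemma expFam_hasDerivAt {X : Type*} [Fintype X] (W : Matrix X X ℝ) (g : X → X → ℝ)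
    (φ : ℝ → ℝ) (v : ℝ → X → ℝ) {t : ℝ} {x x' : X}
    (hφd : DifferentiableAt ℝ φ t)
    (hvx : DifferentiableAt ℝ (fun s => v s x) t)
    (hvx' : DifferentiableAt ℝ (fun s => v s x') t)
    (hx : v t x ≠ 0) (hx' : v t x' ≠ 0) :
    HasDerivAt (fun τ => expFam W g φ v τ x x')
      (expFam W g φ v t x x' * score g φ v t x x') t := by
  have h1 : HasDerivAt (fun τ => (Real.exp (φ τ))⁻¹)
      (-(Real.exp (φ t) * deriv φ t) / (Real.exp (φ t))^2) t :=
    (hφd.hasDerivAt.exp).inv (Real.exp_ne_zero _)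
  have h2 : HasDerivAt (fun τ => v τ x) (deriv (fun s => v s x) t) t := hvx.hasDerivAt
  have h3 : HasDerivAt (fun τ => W x x' * Real.exp (τ * g x x'))
      (W x x' * (Real.exp (t * g x x') * g x x')) t :=
    ((hasDerivAt_mul_const (g x x')).exp).const_mul _
  have h4 : HasDerivAt (fun τ => (v τ x')⁻¹)
      (-(deriv (fun s => v s x') t) / (v t x')^2) t := hvx'.hasDerivAt.inv hx'
  have := ((h1.fun_mul h2).fun_mul h3).fun_mul h4
  refine this.congr_deriv ?_
  simp only [expFam, score, Matrix.of_apply]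
  field_simp
  ring

lemma expFam_col_sum {X : Type*} [Fintype X] (W : Matrix X X ℝ) (g : X → X → ℝ)
    (φ : ℝ → ℝ) (v : ℝ → X → ℝ) (t : ℝ) (x' : X)
    (hv : ∀ x, 0 < v t x)
    (heig : (tilted W g t)ᵀ *ᵥ v t = Real.exp (φ t) • v t) :
    ∑ x, expFam W g φ v t x x' = 1 := by
  have key := congrFun heig x'
  simp only [Matrix.mulVec, Matrix.transpose_apply, dotProduct, tilted, Matrix.of_apply,
    Pi.smul_apply, smul_eq_mul] at key
  have : ∑ x, expFam W g φ v t x x'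
      = (Real.exp (φ t))⁻¹ * (v t x')⁻¹ * ∑ x, W x x' * Real.exp (t * g x x') * v t x := by
    rw [Finset.mul_sum]
    refine Finset.sum_congr rfl fun x _ => ?_
    show (Real.exp (φ t))⁻¹ * v t x * (W x x' * Real.exp (t * g x x')) * (v t x')⁻¹ = _
    ring
  rw [this, key]
  field_simp
  exact div_self (by have := hv x'; positivity)

/-- the Fisher information of the stationary joint-distribution
family `{W_θ × P¹_θ}` decomposes as `J²_θ = φ''(θ) + J¹_θ`, where `J¹_θ` is the
Fisher information of the stationary-distribution family `{P¹_θ}`. -/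
theorem fisher_joint_decomposition {X : Type*} [Fintype X] [DecidableEq X]
    (W : Matrix X X ℝ) (g : X → X → ℝ)
    (hW : IsTransition W) (hirr : IsIrred W)
    (φ : ℝ → ℝ) (v : ℝ → X → ℝ) (hPD : IsPerronData W g φ v)
    (P1 : ℝ → X → ℝ) (hstat : ∀ θ : ℝ, IsStationaryDistr (expFam W g φ v θ) (P1 θ))
    (hφsmooth : ContDiff ℝ 2 φ)
    (hvdiff : ∀ x, Differentiable ℝ (fun t => v t x))
    (hPdiff : ∀ x, Differentiable ℝ (fun t => P1 t x))
    (θ : ℝ) (hPpos : ∀ x, 0 < P1 θ x) :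
    ∑ x, ∑ x', (expFam W g φ v θ x x' * P1 θ x') *
        (deriv (fun t => Real.log (expFam W g φ v t x x' * P1 t x')) θ) ^ 2
      = deriv (deriv φ) θ
        + ∑ x, P1 θ x * (deriv (fun t => Real.log (P1 t x)) θ) ^ 2 := by
  obtain ⟨hWnn, -⟩ := hW
  have hv : ∀ t x, 0 < v t x := fun t x => (hPD t).1 x
  have hφd : Differentiable ℝ φ := hφsmooth.differentiable two_ne_zero
  have hAder : ∀ (t : ℝ) (x x' : X), HasDerivAt (fun τ => expFam W g φ v τ x x')
      (expFam W g φ v t x x' * score g φ v t x x') t := fun t x x' =>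
    expFam_hasDerivAt W g φ v (hφd t) ((hvdiff x) t) ((hvdiff x') t)
      (ne_of_gt (hv t x)) (ne_of_gt (hv t x'))
  have hcol : ∀ (t : ℝ) (x' : X), ∑ x, expFam W g φ v t x x' = 1 := fun t x' =>
    expFam_col_sum W g φ v t x' (hv t) (hPD t).2
  have hstat' : ∀ (t : ℝ) (x : X), ∑ x', expFam W g φ v t x x' * P1 t x' = P1 t x := by
    intro t x
    have := congrFun (hstat t).2.2 x
    simpa [Matrix.mulVec, dotProduct] using this
  have hPsum : ∀ t : ℝ, ∑ x, P1 t x = 1 := fun t => (hstat t).2.1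
  -- the score has zero mean in each column
  have F1 : ∀ (t : ℝ) (x' : X),
      ∑ x, expFam W g φ v t x x' * score g φ v t x x' = 0 := by
    intro t x'
    have hsum : HasDerivAt (fun τ => ∑ x, expFam W g φ v τ x x')
        (∑ x, expFam W g φ v t x x' * score g φ v t x x') t :=
      HasDerivAt.fun_sum fun x _ => hAder t x x'
    have heq : (fun τ => ∑ x, expFam W g φ v τ x x') = fun _ => (1:ℝ) :=
      funext fun τ => hcol τ x'
    rw [heq] at hsum
    exact hsum.unique (hasDerivAt_const t 1)
  -- φ' is the mean of g
  have hφ' : ∀ t : ℝ, deriv φ t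
      = ∑ x, ∑ x', expFam W g φ v t x x' * P1 t x' * g x x' := by
    intro t
    have e1 : ∑ x', P1 t x' * ∑ x, expFam W g φ v t x x' * score g φ v t x x' = 0 := by
      refine Finset.sum_eq_zero fun x' _ => ?_
      rw [F1 t x', mul_zero]
    have e2 : ∑ x', P1 t x' * ∑ x, expFam W g φ v t x x' * score g φ v t x x'
        = (∑ x, ∑ x', expFam W g φ v t x x' * P1 t x' * g x x') - deriv φ t := by
      calc ∑ x', P1 t x' * ∑ x, expFam W g φ v t x x' * score g φ v t x x'
          = ∑ x', ∑ x, ((expFam W g φ v t x x' * P1 t x' * g x x'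
              + (deriv (fun s => v s x) t / v t x) * (expFam W g φ v t x x' * P1 t x'))
            - (deriv φ t * (expFam W g φ v t x x' * P1 t x')
              + (deriv (fun s => v s x') t / v t x') * (expFam W g φ v t x x' * P1 t x'))) := by
            refine Finset.sum_congr rfl fun x' _ => ?_
            rw [Finset.mul_sum]
            refine Finset.sum_congr rfl fun x _ => ?_
            simp only [score]; ring
        _ = ((∑ x', ∑ x, expFam W g φ v t x x' * P1 t x' * g x x')
              + ∑ x', ∑ x, (deriv (fun s => v s x) t / v t x) * (expFam W g φ v t x x' * P1 t x'))
            - ((∑ x', ∑ x, deriv φ t * (expFam W g φ v t x x' * P1 t x'))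
              + ∑ x', ∑ x, (deriv (fun s => v s x') t / v t x') * (expFam W g φ v t x x' * P1 t x')) := by
            simp only [Finset.sum_sub_distrib, Finset.sum_add_distrib]
        _ = ((∑ x, ∑ x', expFam W g φ v t x x' * P1 t x' * g x x')
              + ∑ x, (deriv (fun s => v s x) t / v t x) * P1 t x)
            - (deriv φ t
              + ∑ x', (deriv (fun s => v s x') t / v t x') * P1 t x') := by
            congr 1
            · congr 1
              · exact Finset.sum_comm
              · rw [Finset.sum_comm]
                refine Finset.sum_congr rfl fun x _ => ?_
                rw [← Finset.mul_sum, hstat' t x]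
            · congr 1
              · calc ∑ x', ∑ x, deriv φ t * (expFam W g φ v t x x' * P1 t x')
                    = ∑ x', deriv φ t * P1 t x' := by
                      refine Finset.sum_congr rfl fun x' _ => ?_
                      calc ∑ x, deriv φ t * (expFam W g φ v t x x' * P1 t x')
                          = ∑ x, (deriv φ t * P1 t x') * expFam W g φ v t x x' := by
                            refine Finset.sum_congr rfl fun x _ => ?_; ring
                        _ = (deriv φ t * P1 t x') * ∑ x, expFam W g φ v t x x' :=
                            (Finset.mul_sum _ _ _).symm
                        _ = deriv φ t * P1 t x' := by rw [hcol t x', mul_one]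
                  _ = deriv φ t := by rw [← Finset.mul_sum, hPsum t, mul_one]
              · refine Finset.sum_congr rfl fun x' _ => ?_
                calc ∑ x, (deriv (fun s => v s x') t / v t x') * (expFam W g φ v t x x' * P1 t x')
                    = ∑ x, ((deriv (fun s => v s x') t / v t x') * P1 t x') * expFam W g φ v t x x' := by
                      refine Finset.sum_congr rfl fun x _ => ?_; ring
                  _ = ((deriv (fun s => v s x') t / v t x') * P1 t x') * ∑ x, expFam W g φ v t x x' :=
                      (Finset.mul_sum _ _ _).symm
                  _ = (deriv (fun s => v s x') t / v t x') * P1 t x' := by rw [hcol t x', mul_one]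
        _ = (∑ x, ∑ x', expFam W g φ v t x x' * P1 t x' * g x x') - deriv φ t := by ring
    have := e2 ▸ e1
    linarith [this]
  -- the score of the stationary family
  set r : X → ℝ := fun x => deriv (fun s => P1 s x) θ / P1 θ x with hrdef
  have hB : ∀ x, HasDerivAt (fun t => P1 t x) (P1 θ x * r x) θ := by
    intro x
    have h := ((hPdiff x) θ).hasDerivAt
    refine h.congr_deriv ?_
    simp only [hrdef]
    field_simp [(hPpos x).ne']
  have F3 : ∑ x, P1 θ x * r x = 0 := by
    have hsum : HasDerivAt (fun t => ∑ x, P1 t x) (∑ x, P1 θ x * r x) θ :=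
      HasDerivAt.fun_sum fun x _ => hB x
    have heq : (fun t => ∑ x, P1 t x) = fun _ => (1:ℝ) := funext hPsum
    rw [heq] at hsum
    exact hsum.unique (hasDerivAt_const θ 1)
  have F2 : ∀ x, ∑ x', (expFam W g φ v θ x x' * P1 θ x') * (score g φ v θ x x' + r x')
      = P1 θ x * r x := by
    intro x
    have hL : HasDerivAt (fun t => ∑ x', expFam W g φ v t x x' * P1 t x')
        (∑ x', (expFam W g φ v θ x x' * score g φ v θ x x' * P1 θ x'
          + expFam W g φ v θ x x' * (P1 θ x' * r x'))) θ :=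
      HasDerivAt.fun_sum fun x' _ => (hAder θ x x').fun_mul (hB x')
    have heq : (fun t => ∑ x', expFam W g φ v t x x' * P1 t x') = fun t => P1 t x :=
      funext fun t => hstat' t x
    rw [heq] at hL
    have huniq := hL.unique (hB x)
    rw [← huniq]
    refine Finset.sum_congr rfl fun x' _ => ?_
    ring
  have G : ∀ x', ∑ x, (expFam W g φ v θ x x' * P1 θ x') * (score g φ v θ x x' + r x')
      = P1 θ x' * r x' := by
    intro x'
    calc ∑ x, (expFam W g φ v θ x x' * P1 θ x') * (score g φ v θ x x' + r x')
        = ∑ x, (P1 θ x' * (expFam W g φ v θ x x' * score g φ v θ x x')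
            + (P1 θ x' * r x') * expFam W g φ v θ x x') := by
          refine Finset.sum_congr rfl fun x _ => ?_
          ring
      _ = P1 θ x' * (∑ x, expFam W g φ v θ x x' * score g φ v θ x x')
            + (P1 θ x' * r x') * ∑ x, expFam W g φ v θ x x' := by
          rw [Finset.sum_add_distrib, ← Finset.mul_sum, ← Finset.mul_sum]
      _ = P1 θ x' * r x' := by rw [F1 θ x', hcol θ x', mul_zero, zero_add, mul_one]
  have hphi2 : deriv (deriv φ) θ
      = ∑ x, ∑ x', (expFam W g φ v θ x x' * P1 θ x')
          * (score g φ v θ x x' + r x') * g x x' := by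
    have hder : deriv φ = fun t => ∑ x, ∑ x', expFam W g φ v t x x' * P1 t x' * g x x' :=
      funext hφ'
    rw [hder]
    have hD : HasDerivAt (fun t => ∑ x, ∑ x', expFam W g φ v t x x' * P1 t x' * g x x')
        (∑ x, ∑ x', (expFam W g φ v θ x x' * score g φ v θ x x' * P1 θ x'
          + expFam W g φ v θ x x' * (P1 θ x' * r x')) * g x x') θ :=
      HasDerivAt.fun_sum fun x _ => HasDerivAt.fun_sum fun x' _ =>
        ((hAder θ x x').fun_mul (hB x')).mul_const _
    rw [hD.deriv]
    refine Finset.sum_congr rfl fun x _ => Finset.sum_congr rfl fun x' _ => ?_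
    ring
  have hlogP : ∀ x, deriv (fun t => Real.log (P1 t x)) θ = r x := by
    intro x
    rw [((hB x).log (hPpos x).ne').deriv]
    field_simp [(hPpos x).ne']
  have hlog : ∀ x x', (expFam W g φ v θ x x' * P1 θ x')
        * (deriv (fun t => Real.log (expFam W g φ v t x x' * P1 t x')) θ) ^ 2
      = (expFam W g φ v θ x x' * P1 θ x') * (score g φ v θ x x' + r x') ^ 2 := by
    intro x x'
    by_cases h0 : W x x' = 0
    · have hz : expFam W g φ v θ x x' = 0 := by simp [expFam, h0]
      rw [hz]; ring
    · have hvx := hv θ x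
      have hvx' := hv θ x'
      have hApos : 0 < expFam W g φ v θ x x' := by
        have hw : 0 < W x x' := lt_of_le_of_ne (hWnn x x') (Ne.symm h0)
        simp only [expFam, Matrix.of_apply]
        positivity
      have hq : HasDerivAt (fun t => expFam W g φ v t x x' * P1 t x')
          (expFam W g φ v θ x x' * score g φ v θ x x' * P1 θ x'
            + expFam W g φ v θ x x' * (P1 θ x' * r x')) θ := (hAder θ x x').fun_mul (hB x')
      have hne : expFam W g φ v θ x x' * P1 θ x' ≠ 0 :=
        ne_of_gt (mul_pos hApos (hPpos x'))
      rw [(hq.log hne).deriv]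
      have hA0 : expFam W g φ v θ x x' ≠ 0 := ne_of_gt hApos
      have hB0 : P1 θ x' ≠ 0 := (hPpos x').ne'
      field_simp
  have main : ∑ x, ∑ x', (expFam W g φ v θ x x' * P1 θ x') * (score g φ v θ x x' + r x') ^ 2
      = (∑ x, ∑ x', (expFam W g φ v θ x x' * P1 θ x') * (score g φ v θ x x' + r x') * g x x')
        + ∑ x, P1 θ x * (r x) ^ 2 := by
    calc ∑ x, ∑ x', (expFam W g φ v θ x x' * P1 θ x') * (score g φ v θ x x' + r x') ^ 2
        = ∑ x, ∑ x', (((expFam W g φ v θ x x' * P1 θ x') * (score g φ v θ x x' + r x') * g x x'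
            + r x' * ((expFam W g φ v θ x x' * P1 θ x') * (score g φ v θ x x' + r x'))
            + (deriv (fun s => v s x) θ / v θ x)
              * ((expFam W g φ v θ x x' * P1 θ x') * (score g φ v θ x x' + r x')))
          - (deriv φ θ * ((expFam W g φ v θ x x' * P1 θ x') * (score g φ v θ x x' + r x'))
            + (deriv (fun s => v s x') θ / v θ x')
              * ((expFam W g φ v θ x x' * P1 θ x') * (score g φ v θ x x' + r x')))) := by
          refine Finset.sum_congr rfl fun x _ => Finset.sum_congr rfl fun x' _ => ?_
          simp only [score]
          ring
      _ = ((∑ x, ∑ x', (expFam W g φ v θ x x' * P1 θ x') * (score g φ v θ x x' + r x') * g x x')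
            + (∑ x, ∑ x', r x' * ((expFam W g φ v θ x x' * P1 θ x') * (score g φ v θ x x' + r x')))
            + ∑ x, ∑ x', (deriv (fun s => v s x) θ / v θ x)
              * ((expFam W g φ v θ x x' * P1 θ x') * (score g φ v θ x x' + r x')))
          - ((∑ x, ∑ x', deriv φ θ * ((expFam W g φ v θ x x' * P1 θ x') * (score g φ v θ x x' + r x')))
            + ∑ x, ∑ x', (deriv (fun s => v s x') θ / v θ x')
              * ((expFam W g φ v θ x x' * P1 θ x') * (score g φ v θ x x' + r x'))) := by
          simp only [Finset.sum_sub_distrib, Finset.sum_add_distrib]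
      _ = ((∑ x, ∑ x', (expFam W g φ v θ x x' * P1 θ x') * (score g φ v θ x x' + r x') * g x x')
            + (∑ x', r x' * (P1 θ x' * r x'))
            + ∑ x, (deriv (fun s => v s x) θ / v θ x) * (P1 θ x * r x))
          - (0 + ∑ x', (deriv (fun s => v s x') θ / v θ x') * (P1 θ x' * r x')) := by
          congr 1
          · congr 1
            · congr 1
              rw [Finset.sum_comm]
              refine Finset.sum_congr rfl fun x' _ => ?_
              rw [← Finset.mul_sum, G x']
            · refine Finset.sum_congr rfl fun x _ => ?_
              rw [← Finset.mul_sum, F2 x]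
          · congr 1
            · calc ∑ x, ∑ x', deriv φ θ
                    * ((expFam W g φ v θ x x' * P1 θ x') * (score g φ v θ x x' + r x'))
                  = ∑ x, deriv φ θ * (P1 θ x * r x) := by
                    refine Finset.sum_congr rfl fun x _ => ?_
                    rw [← Finset.mul_sum, F2 x]
                _ = deriv φ θ * ∑ x, P1 θ x * r x := (Finset.mul_sum _ _ _).symm
                _ = 0 := by rw [F3, mul_zero]
            · rw [Finset.sum_comm]
              refine Finset.sum_congr rfl fun x' _ => ?_
              rw [← Finset.mul_sum, G x']
      _ = (∑ x, ∑ x', (expFam W g φ v θ x x' * P1 θ x') * (score g φ v θ x x' + r x') * g x x')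
          + ∑ x, P1 θ x * (r x) ^ 2 := by
          have : ∑ x', r x' * (P1 θ x' * r x') = ∑ x, P1 θ x * (r x) ^ 2 := by
            refine Finset.sum_congr rfl fun x _ => ?_
            ring
          rw [this]
          ring
  calc ∑ x, ∑ x', (expFam W g φ v θ x x' * P1 θ x') *
        (deriv (fun t => Real.log (expFam W g φ v t x x' * P1 t x')) θ) ^ 2
      = ∑ x, ∑ x', (expFam W g φ v θ x x' * P1 θ x') * (score g φ v θ x x' + r x') ^ 2 :=
        Finset.sum_congr rfl fun x _ => Finset.sum_congr rfl fun x' _ => hlog x x'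
    _ = (∑ x, ∑ x', (expFam W g φ v θ x x' * P1 θ x') * (score g φ v θ x x' + r x') * g x x')
        + ∑ x, P1 θ x * (r x) ^ 2 := main
    _ = deriv (deriv φ) θ + ∑ x, P1 θ x * (deriv (fun t => Real.log (P1 t x)) θ) ^ 2 := by
        rw [hphi2]
        congr 1
        refine Finset.sum_congr rfl fun x _ => ?_
        rw [hlogP x]
end

section
/- In the stationary n-step setting, the variance of the sample mean of the generator satisfies Var_θ[g^n(X^{n+1})/n] = φ''(θ)/n + O(n^{−3/2}); in particular n·Var_θ[g^n(X^{n+1})/n] → φ''(θ) as n → ∞. -/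
open Matrix Real

/-- The distribution of a Markov chain of length `n+1` with transition matrix `M`
and initial distribution `P`: `x₁ ∼ P` and each step governed by `M`. -/
noncomputable def chainDist {X : Type*} [Fintype X] (M : Matrix X X ℝ) (P : X → ℝ)
    (n : ℕ) (x : Fin (n + 1) → X) : ℝ :=
  (∏ i : Fin n, M (x i.succ) (x i.castSucc)) * P (x 0)
/-- The additive functional `g^n(x^{n+1}) = Σ_{k=1}^n g(x_{k+1},x_k)`. -/
def addFun {X : Type*} (g : X → X → ℝ) (n : ℕ) (x : Fin (n + 1) → X) : ℝ :=
  ∑ i : Fin n, g (x i.succ) (x i.castSucc)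

/-- The variance of `g^n` under the stationary chain distribution. -/
noncomputable def chainVar {X : Type*} [Fintype X] (M : Matrix X X ℝ) (P : X → ℝ)
    (g : X → X → ℝ) (n : ℕ) : ℝ :=
  (∑ x : Fin (n + 1) → X, chainDist M P n x * (addFun g n x) ^ 2)
    - (∑ x : Fin (n + 1) → X, chainDist M P n x * addFun g n x) ^ 2

set_option linter.unusedSectionVars false
section SumMachinery
variable {X : Type*} [Fintype X]

lemma sum_snoc_eq (n : ℕ) (F : (Fin (n + 2) → X) → ℝ) :
    ∑ z : Fin (n + 2) → X, F z = ∑ x : Fin (n + 1) → X, ∑ y : X, F (Fin.snoc x y) := by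
  rw [← (Fin.snocEquiv (fun _ => X)).sum_comp F, Fintype.sum_prod_type,
    Finset.sum_comm]
  rfl

lemma sum_cons_eq (n : ℕ) (F : (Fin (n + 2) → X) → ℝ) :
    ∑ z : Fin (n + 2) → X, F z = ∑ a : X, ∑ x : Fin (n + 1) → X, F (Fin.cons a x) := by
  rw [← (Fin.consEquiv (fun _ => X)).sum_comp F, Fintype.sum_prod_type]
  rfl

lemma sum_fin_one (F : (Fin 1 → X) → ℝ) :
    ∑ x : Fin 1 → X, F x = ∑ a : X, F (fun _ => a) := by
  rw [← (Equiv.funUnique (Fin 1) X).symm.sum_comp F]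
  rfl
end SumMachinery


section Chain
variable {X : Type*} [Fintype X] (M : Matrix X X ℝ) (P : X → ℝ)

lemma pair_sum_snoc (f : X → X → ℝ) (n : ℕ) (x : Fin (n + 1) → X) (y : X) :
    ∑ i : Fin (n + 1), f ((Fin.snoc x y : Fin (n+2) → X) i.succ) ((Fin.snoc x y : Fin (n+2) → X) i.castSucc)
      = (∑ i : Fin n, f (x i.succ) (x i.castSucc)) + f y (x (Fin.last n)) := by
  rw [Fin.sum_univ_castSucc]
  congr 1
  · apply Finset.sum_congr rfl
    intro i _
    rw [Fin.succ_castSucc, Fin.snoc_castSucc, Fin.snoc_castSucc]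
  · rw [Fin.succ_last, Fin.snoc_last, Fin.snoc_castSucc]

lemma pair_prod_snoc (n : ℕ) (x : Fin (n + 1) → X) (y : X) :
    ∏ i : Fin (n + 1), M ((Fin.snoc x y : Fin (n+2) → X) i.succ) ((Fin.snoc x y : Fin (n+2) → X) i.castSucc)
      = (∏ i : Fin n, M (x i.succ) (x i.castSucc)) * M y (x (Fin.last n)) := by
  rw [Fin.prod_univ_castSucc]
  congr 1
  · apply Finset.prod_congr rfl
    intro i _
    rw [Fin.succ_castSucc, Fin.snoc_castSucc, Fin.snoc_castSucc]
  · rw [Fin.succ_last, Fin.snoc_last, Fin.snoc_castSucc]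

lemma chainDist_snoc (n : ℕ) (x : Fin (n + 1) → X) (y : X) :
    chainDist M P (n + 1) (Fin.snoc x y) = M y (x (Fin.last n)) * chainDist M P n x := by
  unfold chainDist
  rw [pair_prod_snoc]
  have h0 : (Fin.snoc x y : Fin (n+2) → X) 0 = x 0 := by
    rw [show (0 : Fin (n+2)) = Fin.castSucc 0 by rfl, Fin.snoc_castSucc]
  rw [h0]; ring

lemma chainDist_cons (n : ℕ) (a : X) (x : Fin (n + 1) → X) :
    chainDist M P (n + 1) (Fin.cons a x)
      = (∏ i : Fin n, M (x i.succ) (x i.castSucc)) * (M (x 0) a * P a) := by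
  unfold chainDist
  rw [Fin.prod_univ_succ]
  simp only [← Fin.succ_castSucc, Fin.cons_succ, Fin.castSucc_zero, Fin.cons_zero]
  ring

lemma chainDist_zero (x : Fin 1 → X) : chainDist M P 0 x = P (x 0) := by
  simp [chainDist]

lemma telescope_h (h : X → ℝ) : ∀ (n : ℕ) (z : Fin (n + 1) → X),
    ∑ i : Fin n, (h (z i.succ) - h (z i.castSucc)) = h (z (Fin.last n)) - h (z 0) := by
  intro n
  induction n with
  | zero => intro z; simp
  | succ n ih =>
    intro z
    rw [Fin.sum_univ_castSucc]
    have := ih (fun i => z i.castSucc)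
    simp only [Fin.castSucc_zero] at this
    calc (∑ i : Fin n, (h (z i.castSucc.succ) - h (z i.castSucc.castSucc)))
          + (h (z (Fin.last n).succ) - h (z (Fin.last n).castSucc))
        = (∑ i : Fin n, (h ((fun i : Fin (n+1) => z i.castSucc) i.succ)
            - h ((fun i : Fin (n+1) => z i.castSucc) i.castSucc)))
          + (h (z (Fin.last (n+1))) - h (z (Fin.last n).castSucc)) := by
          simp only [Fin.succ_last, Fin.succ_castSucc]
      _ = (h (z (Fin.last n).castSucc) - h (z 0)) + (h (z (Fin.last (n+1))) - h (z (Fin.last n).castSucc)) := by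
          rw [this]
      _ = h (z (Fin.last (n+1))) - h (z 0) := by ring

end Chain


section Expect
variable {X : Type*} [Fintype X] {M : Matrix X X ℝ} {P : X → ℝ}

lemma chain_shift (hMP : M *ᵥ P = P) (n : ℕ) (G : (Fin (n + 1) → X) → ℝ) :
    ∑ z : Fin (n + 2) → X, chainDist M P (n + 1) z * G (Fin.tail z)
      = ∑ x : Fin (n + 1) → X, chainDist M P n x * G x := by
  rw [sum_cons_eq]
  rw [Finset.sum_comm]
  apply Finset.sum_congr rfl
  intro x _
  have : ∀ a : X, chainDist M P (n + 1) (Fin.cons a x)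
        * G (Fin.tail (Fin.cons a x : Fin (n+2) → X))
      = (M (x 0) a * P a) * ((∏ i : Fin n, M (x i.succ) (x i.castSucc)) * G x) := by
    intro a
    rw [chainDist_cons]
    have ht : Fin.tail (Fin.cons a x : Fin (n+2) → X) = x := by
      funext i; simp [Fin.tail]
    rw [ht]
    ring
  rw [Finset.sum_congr rfl (fun a _ => this a), ← Finset.sum_mul]
  have hmv : ∑ a, M (x 0) a * P a = P (x 0) := by
    have := congrFun hMP (x 0)
    simpa [Matrix.mulVec, dotProduct] using this
  rw [hmv, chainDist]
  ring

lemma last_marginal (hMP : M *ᵥ P = P) : ∀ (n : ℕ) (f : X → ℝ),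
    ∑ z : Fin (n + 1) → X, chainDist M P n z * f (z (Fin.last n)) = ∑ a, P a * f a := by
  intro n
  induction n with
  | zero =>
    intro f
    rw [sum_fin_one (fun z => chainDist M P 0 z * f (z (Fin.last 0)))]
    apply Finset.sum_congr rfl
    intro a _
    rw [chainDist_zero]
  | succ n ih =>
    intro f
    have key : ∀ z : Fin (n + 2) → X, chainDist M P (n+1) z * f (z (Fin.last (n+1)))
        = chainDist M P (n+1) z * ((fun x : Fin (n+1) → X => f (x (Fin.last n))) (Fin.tail z)) := by
      intro z
      show chainDist M P (n+1) z * f (z (Fin.last (n+1)))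
        = chainDist M P (n+1) z * f (z (Fin.last n).succ)
      rw [Fin.succ_last]
    rw [Finset.sum_congr rfl (fun z _ => key z)]
    exact (chain_shift hMP n (fun x => f (x (Fin.last n)))).trans (ih _)

lemma zero_marginal (hM1 : ∀ x', ∑ x, M x x' = 1) : ∀ (n : ℕ) (f : X → ℝ),
    ∑ z : Fin (n + 1) → X, chainDist M P n z * f (z 0) = ∑ a, P a * f a := by
  intro n
  induction n with
  | zero =>
    intro f
    rw [sum_fin_one (fun z => chainDist M P 0 z * f (z 0))]
    apply Finset.sum_congr rfl
    intro a _
    rw [chainDist_zero]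
  | succ n ih =>
    intro f
    rw [sum_snoc_eq (n := n) (fun z => chainDist M P (n+1) z * f (z 0))]
    have key : ∀ x : Fin (n+1) → X, ∑ y : X,
        chainDist M P (n+1) (Fin.snoc x y) * f ((Fin.snoc x y : Fin (n+2) → X) 0)
        = chainDist M P n x * f (x 0) := by
      intro x
      have h0 : ∀ y : X, (Fin.snoc x y : Fin (n+2) → X) 0 = x 0 := by
        intro y
        rw [show (0 : Fin (n+2)) = Fin.castSucc 0 by rfl, Fin.snoc_castSucc]
      calc ∑ y : X, chainDist M P (n+1) (Fin.snoc x y) * f ((Fin.snoc x y : Fin (n+2) → X) 0)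
          = ∑ y : X, M y (x (Fin.last n)) * (chainDist M P n x * f (x 0)) := by
            apply Finset.sum_congr rfl
            intro y _
            rw [chainDist_snoc, h0 y]; ring
        _ = chainDist M P n x * f (x 0) := by
            rw [← Finset.sum_mul, hM1]; ring
    rw [Finset.sum_congr rfl (fun x _ => key x)]
    exact ih f

lemma chain_total (hMP : M *ᵥ P = P) (n : ℕ) :
    ∑ z : Fin (n + 1) → X, chainDist M P n z = ∑ a, P a := by
  have := last_marginal (M := M) (P := P) hMP n (fun _ => 1)
  simpa using this

end Expect

section Mart
variable {X : Type*} [Fintype X] {M : Matrix X X ℝ} {P : X → ℝ} {r : X → X → ℝ}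

/-- sum of martingale differences along the path -/
def Af (r : X → X → ℝ) (n : ℕ) (z : Fin (n + 1) → X) : ℝ :=
  ∑ i : Fin n, r (z i.succ) (z i.castSucc)

lemma Af_snoc (n : ℕ) (x : Fin (n + 1) → X) (y : X) :
    Af r (n + 1) (Fin.snoc x y) = Af r n x + r y (x (Fin.last n)) :=
  pair_sum_snoc r n x y

lemma EA_zero (hM1 : ∀ x', ∑ x, M x x' = 1) (hr0 : ∀ x', ∑ x, M x x' * r x x' = 0) :
    ∀ n : ℕ, ∑ z : Fin (n + 1) → X, chainDist M P n z * Af r n z = 0 := by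
  intro n
  induction n with
  | zero => simp [Af]
  | succ n ih =>
    rw [sum_snoc_eq (n := n) (fun z => chainDist M P (n+1) z * Af r (n+1) z)]
    have key : ∀ x : Fin (n+1) → X,
        ∑ y : X, chainDist M P (n+1) (Fin.snoc x y) * Af r (n+1) (Fin.snoc x y)
        = chainDist M P n x * Af r n x := by
      intro x
      calc ∑ y : X, chainDist M P (n+1) (Fin.snoc x y) * Af r (n+1) (Fin.snoc x y)
          = ∑ y : X, (M y (x (Fin.last n)) * (chainDist M P n x * Af r n x)
              + (M y (x (Fin.last n)) * r y (x (Fin.last n))) * chainDist M P n x) := by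
            apply Finset.sum_congr rfl
            intro y _
            rw [chainDist_snoc, Af_snoc]; ring
        _ = (∑ y : X, M y (x (Fin.last n))) * (chainDist M P n x * Af r n x)
              + (∑ y : X, M y (x (Fin.last n)) * r y (x (Fin.last n))) * chainDist M P n x := by
            rw [Finset.sum_add_distrib, Finset.sum_mul, Finset.sum_mul]
        _ = chainDist M P n x * Af r n x := by
            rw [hM1, hr0]; ring
    rw [Finset.sum_congr rfl (fun x _ => key x)]
    exact ih

lemma EA_sq (hM1 : ∀ x', ∑ x, M x x' = 1) (hMP : M *ᵥ P = P)
    (hr0 : ∀ x', ∑ x, M x x' * r x x' = 0) :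
    ∀ n : ℕ, ∑ z : Fin (n + 1) → X, chainDist M P n z * (Af r n z) ^ 2
      = n * (∑ a, P a * ∑ y, M y a * (r y a) ^ 2) := by
  intro n
  induction n with
  | zero => simp [Af]
  | succ n ih =>
    rw [sum_snoc_eq (n := n) (fun z => chainDist M P (n+1) z * (Af r (n+1) z) ^ 2)]
    have key : ∀ x : Fin (n+1) → X,
        ∑ y : X, chainDist M P (n+1) (Fin.snoc x y) * (Af r (n+1) (Fin.snoc x y)) ^ 2
        = chainDist M P n x * (Af r n x) ^ 2
          + chainDist M P n x * (∑ y, M y (x (Fin.last n)) * (r y (x (Fin.last n))) ^ 2) := by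
      intro x
      calc ∑ y : X, chainDist M P (n+1) (Fin.snoc x y) * (Af r (n+1) (Fin.snoc x y)) ^ 2
          = ∑ y : X, (M y (x (Fin.last n)) * (chainDist M P n x * (Af r n x) ^ 2)
              + (M y (x (Fin.last n)) * r y (x (Fin.last n)))
                  * (2 * chainDist M P n x * Af r n x)
              + (M y (x (Fin.last n)) * (r y (x (Fin.last n))) ^ 2) * chainDist M P n x) := by
            apply Finset.sum_congr rfl
            intro y _
            rw [chainDist_snoc, Af_snoc]; ring
        _ = (∑ y : X, M y (x (Fin.last n))) * (chainDist M P n x * (Af r n x) ^ 2)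
              + (∑ y : X, M y (x (Fin.last n)) * r y (x (Fin.last n)))
                  * (2 * chainDist M P n x * Af r n x)
              + (∑ y : X, M y (x (Fin.last n)) * (r y (x (Fin.last n))) ^ 2)
                  * chainDist M P n x := by
            rw [Finset.sum_add_distrib, Finset.sum_add_distrib,
              Finset.sum_mul, Finset.sum_mul, Finset.sum_mul]
        _ = chainDist M P n x * (Af r n x) ^ 2
              + chainDist M P n x * (∑ y, M y (x (Fin.last n)) * (r y (x (Fin.last n))) ^ 2) := by
            rw [hM1, hr0]; ring
    rw [Finset.sum_congr rfl (fun x _ => key x), Finset.sum_add_distrib, ih]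
    rw [last_marginal hMP n (fun a => ∑ y, M y a * (r y a) ^ 2)]
    push_cast
    ring

end Mart


section VarBound
variable {X : Type*} [Fintype X] {M : Matrix X X ℝ} {P : X → ℝ} {g r : X → X → ℝ}
  {h : X → ℝ} {μ : ℝ}

lemma chainDist_nonneg (hM0 : ∀ x x', 0 ≤ M x x') (hP0 : ∀ x, 0 ≤ P x)
    (n : ℕ) (z : Fin (n + 1) → X) : 0 ≤ chainDist M P n z := by
  unfold chainDist
  exact mul_nonneg (Finset.prod_nonneg (fun i _ => hM0 _ _)) (hP0 _)

lemma addFun_decomp (hrdef : ∀ x x', r x x' = g x x' - μ + h x - h x')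
    (n : ℕ) (z : Fin (n + 1) → X) :
    addFun g n z = Af r n z + (h (z 0) - h (z (Fin.last n))) + n * μ := by
  have : Af r n z = ∑ i : Fin n, ((g (z i.succ) (z i.castSucc) - μ)
      + (h (z i.succ) - h (z i.castSucc))) := by
    unfold Af
    apply Finset.sum_congr rfl
    intro i _
    rw [hrdef]; ring
  rw [this, Finset.sum_add_distrib, Finset.sum_sub_distrib, telescope_h,
    Finset.sum_const, Finset.card_univ, Fintype.card_fin]
  unfold addFun
  push_cast
  ring

lemma var_bound (hM0 : ∀ x x', 0 ≤ M x x') (hM1 : ∀ x', ∑ x, M x x' = 1)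
    (hP0 : ∀ x, 0 ≤ P x) (hP1 : ∑ x, P x = 1) (hMP : M *ᵥ P = P)
    (hrdef : ∀ x x', r x x' = g x x' - μ + h x - h x')
    (hr0 : ∀ x', ∑ x, M x x' * r x x' = 0) (n : ℕ) :
    |chainVar M P g n - n * (∑ a, P a * ∑ y, M y a * (r y a) ^ 2)|
      ≤ 2 * (Real.sqrt n * Real.sqrt ((∑ a, P a * ∑ y, M y a * (r y a) ^ 2)
          * (2 * ∑ x, |h x|) ^ 2)) + (2 * ∑ x, |h x|) ^ 2 := by
  set σ2 := ∑ a, P a * ∑ y, M y a * (r y a) ^ 2 with hσ2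
  set H := ∑ x, |h x| with hH
  set K := (2 * H) ^ 2 with hK
  set L := Fin.last n
  set cd := chainDist M P n with hcd
  set A := Af r n with hA
  set B : (Fin (n + 1) → X) → ℝ := fun z => h (z 0) - h (z L) with hB
  -- basic expectations
  have hcd0 : ∀ z, 0 ≤ cd z := chainDist_nonneg hM0 hP0 n
  have E1 : ∑ z : Fin (n + 1) → X, cd z = 1 := by rw [hcd, chain_total hMP, hP1]
  have EA : ∑ z : Fin (n + 1) → X, cd z * A z = 0 := EA_zero hM1 hr0 n
  have EA2 : ∑ z : Fin (n + 1) → X, cd z * (A z) ^ 2 = n * σ2 := EA_sq hM1 hMP hr0 n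
  have Eh0 : ∑ z : Fin (n + 1) → X, cd z * h (z 0) = ∑ a, P a * h a :=
    zero_marginal hM1 n h
  have EhL : ∑ z : Fin (n + 1) → X, cd z * h (z L) = ∑ a, P a * h a :=
    last_marginal hMP n h
  have EB : ∑ z : Fin (n + 1) → X, cd z * B z = 0 := by
    have : ∀ z : Fin (n + 1) → X, cd z * B z = cd z * h (z 0) - cd z * h (z L) := by
      intro z; rw [hB]; ring
    rw [Finset.sum_congr rfl (fun z _ => this z), Finset.sum_sub_distrib, Eh0, EhL, sub_self]
  -- mean
  have S0 : ∑ z : Fin (n + 1) → X, cd z * addFun g n z = n * μ := by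
    have : ∀ z : Fin (n + 1) → X, cd z * addFun g n z
        = cd z * A z + cd z * B z + (n * μ) * cd z := by
      intro z
      rw [addFun_decomp hrdef n z]; rw [hB]; ring
    rw [Finset.sum_congr rfl (fun z _ => this z), Finset.sum_add_distrib,
      Finset.sum_add_distrib, EA, EB, ← Finset.mul_sum, E1]
    ring
  -- second moment
  have S1 : ∑ z : Fin (n + 1) → X, cd z * (addFun g n z) ^ 2
      = n * σ2 + 2 * (∑ z : Fin (n + 1) → X, cd z * (A z * B z))
        + (∑ z : Fin (n + 1) → X, cd z * (B z) ^ 2) + (n * μ) ^ 2 := by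
    have : ∀ z : Fin (n + 1) → X, cd z * (addFun g n z) ^ 2
        = cd z * (A z) ^ 2 + 2 * (cd z * (A z * B z)) + cd z * (B z) ^ 2
          + (2 * (n * μ)) * (cd z * A z) + (2 * (n * μ)) * (cd z * B z)
          + ((n * μ) ^ 2) * cd z := by
      intro z
      rw [addFun_decomp hrdef n z]; rw [hB]; ring
    rw [Finset.sum_congr rfl (fun z _ => this z)]
    rw [Finset.sum_add_distrib, Finset.sum_add_distrib, Finset.sum_add_distrib,
      Finset.sum_add_distrib, Finset.sum_add_distrib]
    rw [← Finset.mul_sum, ← Finset.mul_sum, ← Finset.mul_sum, ← Finset.mul_sum,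
      EA, EB, E1, EA2]
    ring
  -- bounds
  have hσ2nn : 0 ≤ σ2 := by
    apply Finset.sum_nonneg
    intro a _
    exact mul_nonneg (hP0 a) (Finset.sum_nonneg fun y _ =>
      mul_nonneg (hM0 y a) (sq_nonneg _))
  have hKnn : 0 ≤ K := sq_nonneg _
  have hhabs : ∀ a : X, |h a| ≤ H := by
    intro a
    rw [hH]
    exact Finset.single_le_sum (fun x _ => abs_nonneg (h x)) (Finset.mem_univ a)
  have hBabs : ∀ z : Fin (n + 1) → X, |B z| ≤ 2 * H := by
    intro z
    have hbz : B z = h (z 0) - h (z L) := rfl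
    rw [hbz]
    calc |h (z 0) - h (z L)| ≤ |h (z 0)| + |h (z L)| := abs_sub _ _
      _ ≤ H + H := add_le_add (hhabs _) (hhabs _)
      _ = 2 * H := by ring
  have hBsq : ∀ z : Fin (n + 1) → X, (B z) ^ 2 ≤ K := by
    intro z
    have h2 := abs_le.1 (hBabs z)
    rw [hK]
    exact sq_le_sq' h2.1 h2.2
  have EB2nn : 0 ≤ ∑ z : Fin (n + 1) → X, cd z * (B z) ^ 2 :=
    Finset.sum_nonneg fun z _ => mul_nonneg (hcd0 z) (sq_nonneg _)
  have EB2le : ∑ z : Fin (n + 1) → X, cd z * (B z) ^ 2 ≤ K := by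
    calc ∑ z : Fin (n + 1) → X, cd z * (B z) ^ 2
        ≤ ∑ z : Fin (n + 1) → X, cd z * K :=
          Finset.sum_le_sum fun z _ => mul_le_mul_of_nonneg_left (hBsq z) (hcd0 z)
      _ = K := by rw [← Finset.sum_mul, E1, one_mul]
  -- Cauchy–Schwarz
  have CS : (∑ z : Fin (n + 1) → X, cd z * (A z * B z)) ^ 2 ≤ (n * σ2) * K := by
    have key : (∑ z : Fin (n + 1) → X, (Real.sqrt (cd z) * A z) * (Real.sqrt (cd z) * B z)) ^ 2
        ≤ (∑ z : Fin (n + 1) → X, (Real.sqrt (cd z) * A z) ^ 2)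
          * (∑ z : Fin (n + 1) → X, (Real.sqrt (cd z) * B z) ^ 2) :=
      Finset.sum_mul_sq_le_sq_mul_sq _ _ _
    have e1 : ∀ z : Fin (n + 1) → X, (Real.sqrt (cd z) * A z) * (Real.sqrt (cd z) * B z)
        = cd z * (A z * B z) := by
      intro z
      calc (Real.sqrt (cd z) * A z) * (Real.sqrt (cd z) * B z)
          = (Real.sqrt (cd z) * Real.sqrt (cd z)) * (A z * B z) := by ring
        _ = cd z * (A z * B z) := by rw [Real.mul_self_sqrt (hcd0 z)]
    have e2 : ∀ z : Fin (n + 1) → X, (Real.sqrt (cd z) * A z) ^ 2 = cd z * (A z) ^ 2 := by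
      intro z
      calc (Real.sqrt (cd z) * A z) ^ 2
          = (Real.sqrt (cd z) * Real.sqrt (cd z)) * (A z) ^ 2 := by ring
        _ = cd z * (A z) ^ 2 := by rw [Real.mul_self_sqrt (hcd0 z)]
    have e3 : ∀ z : Fin (n + 1) → X, (Real.sqrt (cd z) * B z) ^ 2 = cd z * (B z) ^ 2 := by
      intro z
      calc (Real.sqrt (cd z) * B z) ^ 2
          = (Real.sqrt (cd z) * Real.sqrt (cd z)) * (B z) ^ 2 := by ring
        _ = cd z * (B z) ^ 2 := by rw [Real.mul_self_sqrt (hcd0 z)]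
    rw [Finset.sum_congr rfl (fun z _ => e1 z), Finset.sum_congr rfl (fun z _ => e2 z),
      Finset.sum_congr rfl (fun z _ => e3 z)] at key
    calc (∑ z : Fin (n + 1) → X, cd z * (A z * B z)) ^ 2
        ≤ (∑ z : Fin (n + 1) → X, cd z * (A z) ^ 2)
            * (∑ z : Fin (n + 1) → X, cd z * (B z) ^ 2) := key
      _ ≤ (n * σ2) * K := by
          rw [EA2]
          apply mul_le_mul_of_nonneg_left EB2le
          positivity
  have EABabs : |∑ z : Fin (n + 1) → X, cd z * (A z * B z)|
      ≤ Real.sqrt n * Real.sqrt (σ2 * K) := by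
    have h1 : |∑ z : Fin (n + 1) → X, cd z * (A z * B z)| ≤ Real.sqrt ((n * σ2) * K) :=
      Real.abs_le_sqrt CS
    calc |∑ z : Fin (n + 1) → X, cd z * (A z * B z)|
        ≤ Real.sqrt ((n * σ2) * K) := h1
      _ = Real.sqrt n * Real.sqrt (σ2 * K) := by
          rw [mul_assoc, Real.sqrt_mul (by positivity : (0:ℝ) ≤ (n:ℝ))]
  -- conclude
  have hvar : chainVar M P g n - n * σ2
      = 2 * (∑ z : Fin (n + 1) → X, cd z * (A z * B z))
        + (∑ z : Fin (n + 1) → X, cd z * (B z) ^ 2) := by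
    unfold chainVar
    rw [← hcd, S1, S0]
    ring
  rw [hvar]
  calc |2 * (∑ z : Fin (n + 1) → X, cd z * (A z * B z))
        + (∑ z : Fin (n + 1) → X, cd z * (B z) ^ 2)|
      ≤ 2 * |∑ z : Fin (n + 1) → X, cd z * (A z * B z)|
        + (∑ z : Fin (n + 1) → X, cd z * (B z) ^ 2) := by
        have := abs_add_le (2 * (∑ z : Fin (n + 1) → X, cd z * (A z * B z)))
          (∑ z : Fin (n + 1) → X, cd z * (B z) ^ 2)
        rw [abs_mul, abs_two] at this
        calc |2 * (∑ z : Fin (n + 1) → X, cd z * (A z * B z))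
              + (∑ z : Fin (n + 1) → X, cd z * (B z) ^ 2)|
            ≤ 2 * |∑ z : Fin (n + 1) → X, cd z * (A z * B z)|
              + |∑ z : Fin (n + 1) → X, cd z * (B z) ^ 2| := this
          _ ≤ _ := by rw [abs_of_nonneg EB2nn]
    _ ≤ 2 * (Real.sqrt n * Real.sqrt (σ2 * K)) + K := by
        have h2 : 2 * |∑ z : Fin (n + 1) → X, cd z * (A z * B z)|
            ≤ 2 * (Real.sqrt n * Real.sqrt (σ2 * K)) := by linarith [EABabs]
        exact add_le_add h2 EB2le

end VarBound
open Matrix Real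

section Perron
variable {X : Type*} [Fintype X] [DecidableEq X]
  {W : Matrix X X ℝ} {g : X → X → ℝ} {φ : ℝ → ℝ} {v : ℝ → X → ℝ}

/-- The eigen identity in coordinates. -/
lemma eigen_coord (hPD : IsPerronData W g φ v) (t : ℝ) (x' : X) :
    ∑ x, W x x' * Real.exp (t * g x x') * v t x = Real.exp (φ t) * v t x' := by
  have := congrFun (hPD t).2 x'
  simpa [tilted, Matrix.mulVec, dotProduct, Matrix.transpose_apply, mul_comm,
    mul_assoc, mul_left_comm] using this

/-- Column sums of the exponential family are 1. -/
lemma expFam_colsum (hPD : IsPerronData W g φ v) (t : ℝ) (x' : X) :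
    ∑ x, expFam W g φ v t x x' = 1 := by
  have hv := (hPD t).1
  have h := eigen_coord hPD t x'
  have : ∑ x, expFam W g φ v t x x'
      = (Real.exp (φ t))⁻¹ * (v t x')⁻¹ * ∑ x, W x x' * Real.exp (t * g x x') * v t x := by
    rw [Finset.mul_sum]
    apply Finset.sum_congr rfl
    intro x _
    simp [expFam]
    ring
  rw [this, h]
  have h1 : Real.exp (φ t) ≠ 0 := (Real.exp_pos _).ne'
  have h2 : v t x' ≠ 0 := (hv x').ne'
  field_simp

lemma expFam_nonneg (hW0 : ∀ x x', 0 ≤ W x x') (hPD : IsPerronData W g φ v) (t : ℝ)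
    (x x' : X) : 0 ≤ expFam W g φ v t x x' := by
  have hv := (hPD t).1
  have h1 : 0 < (Real.exp (φ t))⁻¹ := by positivity
  have h2 : 0 < (v t x')⁻¹ := by
    have := hv x'; positivity
  simp only [expFam, Matrix.of_apply]
  have h3 : 0 ≤ W x x' * Real.exp (t * g x x') := mul_nonneg (hW0 x x') (Real.exp_pos _).le
  have h4 : 0 < v t x := hv x
  exact mul_nonneg (mul_nonneg (mul_nonneg h1.le h4.le) h3) h2.le

end Perron

noncomputable def hfun {X : Type*} (v : ℝ → X → ℝ) (t : ℝ) (x : X) : ℝ :=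
  deriv (fun s => v s x) t / v t x

section Poisson
variable {X : Type*} [Fintype X] [DecidableEq X]
  {W : Matrix X X ℝ} {g : X → X → ℝ} {φ : ℝ → ℝ} {v : ℝ → X → ℝ}

lemma lhs_hasDerivAt (hvdiff : ∀ x, Differentiable ℝ (fun t => v t x)) (t : ℝ) (x' : X) :
    HasDerivAt (fun s => ∑ x, W x x' * Real.exp (s * g x x') * v s x)
      (∑ x, W x x' * Real.exp (t * g x x') * (g x x' * v t x + deriv (fun s => v s x) t)) t := by
  apply HasDerivAt.fun_sum
  intro x _
  have h1 : HasDerivAt (fun s : ℝ => s * g x x') (g x x') t := hasDerivAt_mul_const _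
  have h2 : HasDerivAt (fun s : ℝ => Real.exp (s * g x x'))
      (Real.exp (t * g x x') * g x x') t := h1.exp
  have h3 : HasDerivAt (fun s : ℝ => W x x' * Real.exp (s * g x x'))
      (W x x' * (Real.exp (t * g x x') * g x x')) t := h2.const_mul _
  have h4 := h3.fun_mul ((hvdiff x) t).hasDerivAt
  convert h4 using 1
  on_goal 1 => rfl
  ring

lemma rhs_hasDerivAt (hφd : Differentiable ℝ φ)
    (hvdiff : ∀ x, Differentiable ℝ (fun t => v t x)) (t : ℝ) (x' : X) :
    HasDerivAt (fun s => Real.exp (φ s) * v s x')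
      (deriv φ t * Real.exp (φ t) * v t x' + Real.exp (φ t) * deriv (fun s => v s x') t) t := by
  have h1 : HasDerivAt (fun s => Real.exp (φ s)) (Real.exp (φ t) * deriv φ t) t :=
    ((hφd t).hasDerivAt).exp
  have h2 := h1.fun_mul ((hvdiff x') t).hasDerivAt
  convert h2 using 1
  on_goal 1 => rfl
  on_goal 1 => rfl
  ring

lemma eigen_deriv (hPD : IsPerronData W g φ v) (hφd : Differentiable ℝ φ)
    (hvdiff : ∀ x, Differentiable ℝ (fun t => v t x)) (t : ℝ) (x' : X) :
    (∑ x, W x x' * Real.exp (t * g x x') * (g x x' * v t x + deriv (fun s => v s x) t))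
      = deriv φ t * Real.exp (φ t) * v t x' + Real.exp (φ t) * deriv (fun s => v s x') t := by
  have hF := lhs_hasDerivAt (W := W) (g := g) hvdiff t x'
  have hG := rhs_hasDerivAt (φ := φ) (v := v) hφd hvdiff t x'
  have hFG : (fun s => ∑ x, W x x' * Real.exp (s * g x x') * v s x)
      = (fun s => Real.exp (φ s) * v s x') := funext (fun s => eigen_coord hPD s x')
  rw [hFG] at hF
  exact hF.unique hG

/-- The Poisson equation: `ĝ + T h = φ' + h`. -/
lemma poisson (hPD : IsPerronData W g φ v) (hφd : Differentiable ℝ φ)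
    (hvdiff : ∀ x, Differentiable ℝ (fun t => v t x)) (t : ℝ) (x' : X) :
    (∑ x, expFam W g φ v t x x' * g x x') + (∑ x, expFam W g φ v t x x' * hfun v t x)
      = deriv φ t + hfun v t x' := by
  have hv := (hPD t).1
  have he : Real.exp (φ t) ≠ 0 := (Real.exp_pos _).ne'
  have hc : v t x' ≠ 0 := (hv x').ne'
  have termwise : ∀ x, expFam W g φ v t x x' * g x x' + expFam W g φ v t x x' * hfun v t x
      = (Real.exp (φ t) * v t x')⁻¹
        * (W x x' * Real.exp (t * g x x') * (g x x' * v t x + deriv (fun s => v s x) t)) := by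
    intro x
    have hvx : v t x ≠ 0 := (hv x).ne'
    simp only [expFam, Matrix.of_apply, hfun]
    field_simp
  rw [← Finset.sum_add_distrib, Finset.sum_congr rfl (fun x _ => termwise x),
    ← Finset.mul_sum, eigen_deriv hPD hφd hvdiff t x']
  rw [hfun]
  field_simp
end Poisson

section StatMean
variable {X : Type*} [Fintype X] [DecidableEq X]
  {W : Matrix X X ℝ} {g : X → X → ℝ} {φ : ℝ → ℝ} {v : ℝ → X → ℝ}

/-- swap lemma : `∑_{x'} P x' ∑_x M x x' f x = ∑_x f x * (M *ᵥ P) x`. -/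
lemma sum_swap_mulVec (M : Matrix X X ℝ) (P f : X → ℝ) :
    ∑ x', P x' * ∑ x, M x x' * f x = ∑ x, f x * (M *ᵥ P) x := by
  simp only [Matrix.mulVec, dotProduct, Finset.mul_sum]
  rw [Finset.sum_comm]
  apply Finset.sum_congr rfl
  intro x _
  apply Finset.sum_congr rfl
  intro x' _
  ring

lemma stat_mean (hPD : IsPerronData W g φ v) (hφd : Differentiable ℝ φ)
    (hvdiff : ∀ x, Differentiable ℝ (fun t => v t x)) (t : ℝ) {Pt : X → ℝ}
    (hst : IsStationaryDistr (expFam W g φ v t) Pt) :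
    ∑ x', Pt x' * ∑ x, expFam W g φ v t x x' * g x x' = deriv φ t := by
  obtain ⟨hP0, hP1, hMP⟩ := hst
  have key : ∑ x', Pt x' * ((∑ x, expFam W g φ v t x x' * g x x')
        + (∑ x, expFam W g φ v t x x' * hfun v t x))
      = ∑ x', Pt x' * (deriv φ t + hfun v t x') :=
    Finset.sum_congr rfl (fun x' _ => by rw [poisson hPD hφd hvdiff t x'])
  have e1 : ∑ x', Pt x' * ((∑ x, expFam W g φ v t x x' * g x x')
        + (∑ x, expFam W g φ v t x x' * hfun v t x))
      = (∑ x', Pt x' * ∑ x, expFam W g φ v t x x' * g x x')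
        + (∑ x', Pt x' * ∑ x, expFam W g φ v t x x' * hfun v t x) := by
    rw [← Finset.sum_add_distrib]
    exact Finset.sum_congr rfl (fun x' _ => by ring)
  have e2 : ∑ x', Pt x' * ∑ x, expFam W g φ v t x x' * hfun v t x
      = ∑ x, hfun v t x * Pt x := by
    rw [sum_swap_mulVec, hMP]
  have e3 : ∑ x', Pt x' * (deriv φ t + hfun v t x')
      = deriv φ t * (∑ x', Pt x') + ∑ x', Pt x' * hfun v t x' := by
    rw [Finset.mul_sum, ← Finset.sum_add_distrib]
    exact Finset.sum_congr rfl (fun x' _ => by ring)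
  rw [e1, e2] at key
  rw [e3, hP1] at key
  have : ∑ x, hfun v t x * Pt x = ∑ x', Pt x' * hfun v t x' :=
    Finset.sum_congr rfl (fun x _ => by ring)
  rw [this] at key
  linarith [key]
end StatMean

section LinAlg
variable {X : Type*} [Fintype X] [DecidableEq X]

lemma pow_entry_nonneg {M : Matrix X X ℝ} (hM0 : ∀ x x', 0 ≤ M x x') :
    ∀ (n : ℕ) (x x' : X), 0 ≤ (M ^ n) x x' := by
  intro n
  induction n with
  | zero => intro x x'; simp [Matrix.one_apply]; split <;> norm_num
  | succ n ih =>
    intro x x'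
    rw [pow_succ]
    exact Finset.sum_nonneg fun y _ => mul_nonneg (ih x y) (hM0 y x')

lemma fixed_pos {M : Matrix X X ℝ} (hM0 : ∀ x x', 0 ≤ M x x')
    (hirr : ∀ x x', ∃ n, 0 < (M ^ n) x x') {z : X → ℝ} (hfix : M *ᵥ z = z)
    (hz0 : ∀ x, 0 ≤ z x) {x1 : X} (hx1 : 0 < z x1) : ∀ x, 0 < z x := by
  have hpow : ∀ n : ℕ, (M ^ n) *ᵥ z = z := by
    intro n
    induction n with
    | zero => simp
    | succ n ih => rw [pow_succ, ← Matrix.mulVec_mulVec, hfix, ih]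
  intro x
  obtain ⟨n, hn⟩ := hirr x x1
  have := congrFun (hpow n) x
  rw [Matrix.mulVec, dotProduct] at this
  have hge : (M ^ n) x x1 * z x1 ≤ ∑ y, (M ^ n) x y * z y :=
    Finset.single_le_sum (fun y _ => mul_nonneg (pow_entry_nonneg hM0 n x y) (hz0 y))
      (Finset.mem_univ x1)
  rw [this] at hge
  exact lt_of_lt_of_le (mul_pos hn hx1) hge

lemma pow_dominate {A B : Matrix X X ℝ} {c : ℝ} (hc : 0 ≤ c)
    (hB0 : ∀ x x', 0 ≤ B x x') (hdom : ∀ x x', c * B x x' ≤ A x x') :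
    ∀ (n : ℕ) (x x' : X), c ^ n * (B ^ n) x x' ≤ (A ^ n) x x' := by
  have hA0 : ∀ x x', 0 ≤ A x x' := fun x x' =>
    le_trans (mul_nonneg hc (hB0 x x')) (hdom x x')
  intro n
  induction n with
  | zero => intro x x'; simp
  | succ n ih =>
    intro x x'
    have hBe : (B ^ (n+1)) x x' = ∑ y, (B ^ n) x y * B y x' := by
      rw [pow_succ, Matrix.mul_apply]
    have hAe : (A ^ (n+1)) x x' = ∑ y, (A ^ n) x y * A y x' := by
      rw [pow_succ, Matrix.mul_apply]
    rw [hBe, hAe, Finset.mul_sum]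
    apply Finset.sum_le_sum
    intro y _
    calc c ^ (n + 1) * ((B ^ n) x y * B y x')
        = (c ^ n * (B ^ n) x y) * (c * B y x') := by ring
      _ ≤ (A ^ n) x y * A y x' := by
          apply mul_le_mul (ih x y) (hdom y x')
            (mul_nonneg hc (hB0 y x'))
            (pow_entry_nonneg hA0 n x y)

/-- the matrix `M - I + J` used to invert the stationarity equation -/
noncomputable def Bmat (M : Matrix X X ℝ) : Matrix X X ℝ :=
  Matrix.of fun x x' => M x x' + 1 - (if x = x' then 1 else 0)

lemma Bmat_mulVec (M : Matrix X X ℝ) (u : X → ℝ) (x : X) :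
    (Bmat M *ᵥ u) x = (M *ᵥ u) x + (∑ y, u y) - u x := by
  simp only [Bmat, Matrix.mulVec, dotProduct, Matrix.of_apply]
  rw [Finset.sum_congr rfl (fun x' (_ : x' ∈ Finset.univ) =>
    (show (M x x' + 1 - if x = x' then 1 else 0) * u x'
      = M x x' * u x' + u x' - (if x = x' then 1 else 0) * u x' from by ring))]
  rw [Finset.sum_sub_distrib, Finset.sum_add_distrib]
  have hid : ∑ x_1, (if x = x_1 then 1 else 0) * u x_1 = u x := by simp
  rw [hid]

lemma Bmat_det_ne_zero {M : Matrix X X ℝ} {P : X → ℝ}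
    (hM0 : ∀ x x', 0 ≤ M x x') (hM1 : ∀ x', ∑ x, M x x' = 1)
    (hirr : ∀ x x', ∃ n, 0 < (M ^ n) x x')
    (hP0 : ∀ x, 0 ≤ P x) (hP1 : ∑ x, P x = 1) (hMP : M *ᵥ P = P) :
    (Bmat M).det ≠ 0 := by
  have hX : Nonempty X := by
    by_contra hempty
    rw [not_nonempty_iff] at hempty
    rw [Finset.univ_eq_empty, Finset.sum_empty] at hP1
    norm_num at hP1
  -- P is positive
  have hPx1 : ∃ x1, 0 < P x1 := by
    by_contra hno
    push_neg at hno
    have : ∑ x, P x ≤ 0 := Finset.sum_nonpos fun x _ => hno x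
    rw [hP1] at this; norm_num at this
  obtain ⟨x1, hx1⟩ := hPx1
  have hPpos : ∀ x, 0 < P x := fixed_pos hM0 hirr hMP hP0 hx1
  -- kernel is trivial
  intro hdet
  rw [← Matrix.exists_mulVec_eq_zero_iff] at hdet
  obtain ⟨u, hu0, huB⟩ := hdet
  have hcoord : ∀ x, (M *ᵥ u) x + (∑ y, u y) - u x = 0 := by
    intro x
    rw [← Bmat_mulVec M u x, huB]
    rfl
  -- sum over x gives ∑ u = 0
  have hsumMu : ∑ x, (M *ᵥ u) x = ∑ y, u y := by
    simp only [Matrix.mulVec, dotProduct]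
    rw [Finset.sum_comm]
    apply Finset.sum_congr rfl
    intro y _
    rw [← Finset.sum_mul, hM1, one_mul]
  have hsum0 : (∑ y, u y) = 0 := by
    have := Finset.sum_congr rfl (fun x (_ : x ∈ Finset.univ) => hcoord x)
    rw [Finset.sum_sub_distrib, Finset.sum_add_distrib, hsumMu, Finset.sum_const,
      Finset.card_univ, Finset.sum_const_zero] at this
    have hcard : 0 < (Fintype.card X : ℝ) := by
      have := Fintype.card_pos (α := X)
      exact_mod_cast this
    rw [nsmul_eq_mul] at this
    have hCS : (Fintype.card X : ℝ) * (∑ y, u y) = 0 := by linarith [this]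
    rcases mul_eq_zero.mp hCS with h | h
    · exact absurd h (ne_of_gt hcard)
    · exact h
  have hfixu : M *ᵥ u = u := by
    funext x
    have := hcoord x
    rw [hsum0] at this
    linarith
  -- build nonnegative fixed vector
  have hXne : (Finset.univ : Finset X).Nonempty := Finset.univ_nonempty
  set s := Finset.univ.sup' hXne (fun x => -u x / P x) with hs
  set w := fun x => u x + s * P x with hw
  have hw0 : ∀ x, 0 ≤ w x := by
    intro x
    have hle : -u x / P x ≤ s := by
      rw [hs]; exact Finset.le_sup' (fun x => -u x / P x) (Finset.mem_univ x)
    have := mul_le_mul_of_nonneg_right hle (hPpos x).le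
    rw [div_mul_cancel₀ _ (hPpos x).ne'] at this
    simp only [hw]
    linarith
  have hfixw : M *ᵥ w = w := by
    funext x
    simp only [hw, Matrix.mulVec, dotProduct]
    rw [Finset.sum_congr rfl (fun x' (_ : x' ∈ Finset.univ) =>
      (show M x x' * (u x' + s * P x') = M x x' * u x' + s * (M x x' * P x') from by ring))]
    rw [Finset.sum_add_distrib, ← Finset.mul_sum]
    have h1 : ∑ x', M x x' * u x' = u x := by
      have := congrFun hfixu x
      simpa [Matrix.mulVec, dotProduct] using this
    have h2 : ∑ x', M x x' * P x' = P x := by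
      have := congrFun hMP x
      simpa [Matrix.mulVec, dotProduct] using this
    rw [h1, h2]
  obtain ⟨x0, _, hx0⟩ := Finset.exists_mem_eq_sup' hXne (fun x => -u x / P x)
  have hwx0 : w x0 = 0 := by
    have hc : -u x0 / P x0 * P x0 = -u x0 := div_mul_cancel₀ _ (hPpos x0).ne'
    simp only [hw]
    rw [hs, hx0]
    linarith [hc]
  by_cases hcase : ∃ y, 0 < w y
  · obtain ⟨y, hy⟩ := hcase
    have := fixed_pos hM0 hirr hfixw hw0 hy x0
    rw [hwx0] at this
    exact lt_irrefl 0 this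
  · push_neg at hcase
    have hweq : ∀ x, w x = 0 := fun x => le_antisymm (hcase x) (hw0 x)
    have hsval : s = 0 := by
      have : ∑ x, w x = 0 := by
        rw [Finset.sum_congr rfl (fun x _ => hweq x)]
        simp
      simp only [hw] at this
      rw [Finset.sum_add_distrib, hsum0, ← Finset.mul_sum, hP1] at this
      linarith
    apply hu0
    funext x
    have h0 := hweq x
    simp only [hw, hsval, zero_mul, add_zero] at h0
    simpa using h0

lemma stationary_cramer {M : Matrix X X ℝ} {P : X → ℝ}
    (hdet : (Bmat M).det ≠ 0) (hM1 : ∀ x', ∑ x, M x x' = 1)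
    (hP1 : ∑ x, P x = 1) (hMP : M *ᵥ P = P) (x : X) :
    P x = ((Bmat M).det)⁻¹ * Matrix.cramer (Bmat M) (fun _ => 1) x := by
  have hBP : Bmat M *ᵥ P = fun _ => 1 := by
    funext x
    rw [Bmat_mulVec, hP1]
    have := congrFun hMP x
    rw [this]
    ring
  have hcr : Bmat M *ᵥ Matrix.cramer (Bmat M) (fun _ => 1) = (Bmat M).det • (fun _ => (1:ℝ)) :=
    Matrix.mulVec_cramer _ _
  have hdetP : Bmat M *ᵥ ((Bmat M).det • P) = Bmat M *ᵥ Matrix.cramer (Bmat M) (fun _ => 1) := by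
    rw [Matrix.mulVec_smul, hBP, hcr]
  have hinj : Function.Injective (Bmat M).mulVec := by
    intro a b hab
    have h := sub_eq_zero.mpr hab
    rw [← Matrix.mulVec_sub] at h
    by_contra hne
    have : ∃ vv, vv ≠ 0 ∧ Bmat M *ᵥ vv = 0 := ⟨a - b, by
      intro hz
      apply hne
      have := sub_eq_zero.mp hz
      exact this, h⟩
    rw [Matrix.exists_mulVec_eq_zero_iff] at this
    exact hdet this
  have := hinj hdetP
  have hx := congrFun this x
  simp only [Pi.smul_apply, smul_eq_mul] at hx
  rw [← hx]
  field_simp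

end LinAlg

section Diffy
variable {X : Type*} [Fintype X] [DecidableEq X]
  {W : Matrix X X ℝ} {g : X → X → ℝ} {φ : ℝ → ℝ} {v : ℝ → X → ℝ}

lemma entry_hasDerivAt (hPD : IsPerronData W g φ v) (hφd : Differentiable ℝ φ)
    (hvdiff : ∀ x, Differentiable ℝ (fun t => v t x)) (θ : ℝ) (x x' : X) :
    HasDerivAt (fun t => expFam W g φ v t x x')
      (expFam W g φ v θ x x'
        * (g x x' - deriv φ θ + hfun v θ x - hfun v θ x')) θ := by
  have hvx : v θ x ≠ 0 := ((hPD θ).1 x).ne'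
  have hvx' : v θ x' ≠ 0 := ((hPD θ).1 x').ne'
  have he : Real.exp (φ θ) ≠ 0 := (Real.exp_pos _).ne'
  have h1 : HasDerivAt (fun t => (Real.exp (φ t))⁻¹)
      (-(Real.exp (φ θ) * deriv φ θ) / (Real.exp (φ θ)) ^ 2) θ :=
    (((hφd θ).hasDerivAt).exp).inv he
  have h2 : HasDerivAt (fun t => v t x) (deriv (fun s => v s x) θ) θ :=
    ((hvdiff x) θ).hasDerivAt
  have h3 : HasDerivAt (fun t => W x x' * Real.exp (t * g x x'))
      (W x x' * (Real.exp (θ * g x x') * g x x')) θ :=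
    ((hasDerivAt_mul_const (g x x')).exp).const_mul _
  have h4 : HasDerivAt (fun t => (v t x')⁻¹)
      (-(deriv (fun s => v s x') θ) / (v θ x') ^ 2) θ :=
    (((hvdiff x') θ).hasDerivAt).inv hvx'
  have H := ((h1.fun_mul h2).fun_mul h3).fun_mul h4
  have hfn : (fun t => (((Real.exp (φ t))⁻¹ * v t x) * (W x x' * Real.exp (t * g x x')))
      * (v t x')⁻¹) = fun t => expFam W g φ v t x x' := rfl
  rw [hfn] at H
  convert H using 1
  on_goal 1 => rfl
  on_goal 1 => rfl
  simp only [expFam, Matrix.of_apply, hfun]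
  field_simp
  ring

lemma entry_differentiable (hPD : IsPerronData W g φ v) (hφd : Differentiable ℝ φ)
    (hvdiff : ∀ x, Differentiable ℝ (fun t => v t x)) (x x' : X) :
    Differentiable ℝ (fun t => expFam W g φ v t x x') := fun θ =>
  (entry_hasDerivAt hPD hφd hvdiff θ x x').differentiableAt

lemma differentiable_det {A : ℝ → Matrix X X ℝ}
    (hA : ∀ x x', Differentiable ℝ fun t => A t x x') :
    Differentiable ℝ (fun t => (A t).det) := by
  have hfn : (fun t => (A t).det)
      = fun t => ∑ σ : Equiv.Perm X, ((Equiv.Perm.sign σ : ℤ) : ℝ) * ∏ i, A t (σ i) i :=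
    funext fun t => by rw [Matrix.det_apply']
  rw [hfn]
  apply Differentiable.fun_sum
  intro σ _
  apply Differentiable.const_mul
  intro t
  exact DifferentiableAt.fun_finsetProd (fun i _ => (hA (σ i) i) t)

lemma differentiable_cramer_one {A : ℝ → Matrix X X ℝ}
    (hA : ∀ x x', Differentiable ℝ fun t => A t x x') (x : X) :
    Differentiable ℝ (fun t => Matrix.cramer (A t) (fun _ => (1:ℝ)) x) := by
  have hfn : (fun t => Matrix.cramer (A t) (fun _ => (1:ℝ)) x)
      = fun t => ((A t).updateCol x (fun _ => (1:ℝ))).det :=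
    funext fun t => by rw [Matrix.cramer_apply]
  rw [hfn]
  apply differentiable_det
  intro a b
  by_cases hb : b = x
  · subst hb
    simp only [Matrix.updateCol_apply, if_pos rfl]
    exact differentiable_const 1
  · have : (fun t => ((A t).updateCol x fun _ => (1:ℝ)) a b) = fun t => A t a b := by
      funext t
      rw [Matrix.updateCol_apply, if_neg hb]
    rw [this]
    exact hA a b

end Diffy

section PDiff
variable {X : Type*} [Fintype X] [DecidableEq X]
  {W : Matrix X X ℝ} {g : X → X → ℝ} {φ : ℝ → ℝ} {v : ℝ → X → ℝ} {P1 : ℝ → X → ℝ}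

lemma expFam_irred (hW : IsTransition W) (hirr : IsIrred W) (hPD : IsPerronData W g φ v)
    (t : ℝ) : ∀ x x', ∃ n, 0 < ((expFam W g φ v t) ^ n) x x' := by
  intro x x'
  obtain ⟨n, hn⟩ := hirr x x'
  have hne : Nonempty X := ⟨x⟩
  have huneP : (Finset.univ : Finset (X × X)).Nonempty := Finset.univ_nonempty
  set f : X × X → ℝ :=
    fun p => (Real.exp (φ t))⁻¹ * v t p.1 * Real.exp (t * g p.1 p.2) * (v t p.2)⁻¹ with hf
  set c := Finset.univ.inf' huneP f with hc
  have hcpos : 0 < c := by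
    rw [hc, Finset.lt_inf'_iff]
    intro p _
    have h1 := (hPD t).1 p.1
    have h2 := (hPD t).1 p.2
    rw [hf]
    positivity
  have hdom : ∀ a b, c * W a b ≤ expFam W g φ v t a b := by
    intro a b
    have hfle : c ≤ f (a, b) := Finset.inf'_le _ (Finset.mem_univ _)
    have heq : expFam W g φ v t a b = f (a, b) * W a b := by
      simp only [expFam, Matrix.of_apply, hf]
      ring
    rw [heq]
    exact mul_le_mul_of_nonneg_right hfle (hW.1 a b)
  refine ⟨n, ?_⟩
  calc (0:ℝ) < c ^ n * (W ^ n) x x' := mul_pos (pow_pos hcpos n) hn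
    _ ≤ ((expFam W g φ v t) ^ n) x x' := pow_dominate hcpos.le hW.1 hdom n x x'

lemma P1_differentiable (hW : IsTransition W) (hirr : IsIrred W)
    (hPD : IsPerronData W g φ v) (hφd : Differentiable ℝ φ)
    (hvdiff : ∀ x, Differentiable ℝ (fun t => v t x))
    (hstat : ∀ t : ℝ, IsStationaryDistr (expFam W g φ v t) (P1 t)) (x : X) :
    Differentiable ℝ (fun t => P1 t x) := by
  have hdet : ∀ t, (Bmat (expFam W g φ v t)).det ≠ 0 := fun t =>
    Bmat_det_ne_zero (expFam_nonneg hW.1 hPD t) (expFam_colsum hPD t)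
      (expFam_irred hW hirr hPD t) (hstat t).1 (hstat t).2.1 (hstat t).2.2
  have hform : (fun t => P1 t x) = fun t =>
      ((Bmat (expFam W g φ v t)).det)⁻¹
        * Matrix.cramer (Bmat (expFam W g φ v t)) (fun _ => 1) x :=
    funext fun t => stationary_cramer (hdet t) (expFam_colsum hPD t)
      (hstat t).2.1 (hstat t).2.2 x
  rw [hform]
  have hB : ∀ a b, Differentiable ℝ (fun t => Bmat (expFam W g φ v t) a b) := by
    intro a b
    have : (fun t => Bmat (expFam W g φ v t) a b)
        = fun t => expFam W g φ v t a b + 1 - (if a = b then 1 else 0) := rfl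
    rw [this]
    exact ((entry_differentiable hPD hφd hvdiff a b).add_const 1).sub_const _
  exact ((differentiable_det hB).inv hdet).mul
    (differentiable_cramer_one hB x)

end PDiff

section SecondDeriv
variable {X : Type*} [Fintype X] [DecidableEq X]

/-- Algebraic identity: derivative of the stationary mean equals σ². -/
lemma V_eq_sigma2 {M : Matrix X X ℝ} {P P' : X → ℝ} {r : X → X → ℝ} {h : X → ℝ}
    {μ : ℝ} {g : X → X → ℝ}
    (hq : ∀ x x', r x x' = g x x' - μ + h x - h x')
    (hr0 : ∀ x', ∑ x, M x x' * r x x' = 0)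
    (hP'sum : ∑ x, P' x = 0)
    (hP'fix : ∀ x, (∑ x', (M x x' * r x x' * P x' + M x x' * P' x')) = P' x)
    (hpoisson : ∀ x', (∑ x, M x x' * g x x') = μ + h x' - ∑ x, M x x' * h x) :
    ∑ x', (P' x' * (∑ x, M x x' * g x x') + P x' * (∑ x, M x x' * r x x' * g x x'))
      = ∑ x', P x' * ∑ x, M x x' * (r x x') ^ 2 := by
  -- key identity (†): ∑ P' ĝ = ∑_{x'} P x' ∑_x M r h∘fst
  have swap1 : ∑ x', P' x' * ∑ x, M x x' * h x = ∑ x, h x * ∑ x', M x x' * P' x' := by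
    simp only [Finset.mul_sum]
    rw [Finset.sum_comm]
    exact Finset.sum_congr rfl fun x _ => Finset.sum_congr rfl fun x' _ => by ring
  have hMP' : ∀ x, ∑ x', M x x' * P' x' = P' x - ∑ x', M x x' * r x x' * P x' := by
    intro x
    have := hP'fix x
    rw [Finset.sum_add_distrib] at this
    linarith
  have dagger : ∑ x', P' x' * (∑ x, M x x' * g x x')
      = ∑ x', P x' * ∑ x, M x x' * r x x' * h x := by
    have e1 : ∑ x', P' x' * (∑ x, M x x' * g x x')
        = μ * (∑ x', P' x') + (∑ x', P' x' * h x')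
          - ∑ x', P' x' * ∑ x, M x x' * h x := by
      rw [Finset.mul_sum, ← Finset.sum_add_distrib, ← Finset.sum_sub_distrib]
      apply Finset.sum_congr rfl
      intro x' _
      rw [hpoisson x']
      ring
    rw [e1, hP'sum, swap1, mul_zero, zero_add]
    have e2 : ∑ x, h x * (∑ x', M x x' * P' x')
        = (∑ x, h x * P' x) - ∑ x, h x * ∑ x', M x x' * r x x' * P x' := by
      rw [← Finset.sum_sub_distrib]
      apply Finset.sum_congr rfl
      intro x _
      rw [hMP' x]
      ring
    rw [e2]
    have e3 : ∑ x', P' x' * h x' = ∑ x, h x * P' x :=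
      Finset.sum_congr rfl fun x _ => by ring
    rw [e3]
    have e4 : ∑ x, h x * ∑ x', M x x' * r x x' * P x'
        = ∑ x', P x' * ∑ x, M x x' * r x x' * h x := by
      simp only [Finset.mul_sum]
      rw [Finset.sum_comm]
      exact Finset.sum_congr rfl fun x _ => Finset.sum_congr rfl fun x' _ => by ring
    rw [e4]
    ring
  -- expand σ² using r = g - μ + h∘fst - h∘snd
  have expand : ∀ x', ∑ x, M x x' * (r x x') ^ 2
      = (∑ x, M x x' * r x x' * g x x') + (∑ x, M x x' * r x x' * h x)
        + (- μ - h x') * (∑ x, M x x' * r x x') := by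
    intro x'
    rw [Finset.mul_sum, ← Finset.sum_add_distrib, ← Finset.sum_add_distrib]
    apply Finset.sum_congr rfl
    intro x _
    rw [show (r x x') ^ 2 = r x x' * r x x' from sq (r x x'), hq x x']
    ring
  calc ∑ x', (P' x' * (∑ x, M x x' * g x x') + P x' * (∑ x, M x x' * r x x' * g x x'))
      = (∑ x', P' x' * (∑ x, M x x' * g x x'))
        + ∑ x', P x' * (∑ x, M x x' * r x x' * g x x') := Finset.sum_add_distrib
    _ = (∑ x', P x' * ∑ x, M x x' * r x x' * h x)
        + ∑ x', P x' * (∑ x, M x x' * r x x' * g x x') := by rw [dagger]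
    _ = ∑ x', P x' * ∑ x, M x x' * (r x x') ^ 2 := by
        rw [← Finset.sum_add_distrib]
        apply Finset.sum_congr rfl
        intro x' _
        rw [expand x', hr0 x']
        ring
end SecondDeriv

section Deriv2
variable {X : Type*} [Fintype X] [DecidableEq X]
  {W : Matrix X X ℝ} {g : X → X → ℝ} {φ : ℝ → ℝ} {v : ℝ → X → ℝ} {P1 : ℝ → X → ℝ}

lemma deriv2_eq_sigma2 (hW : IsTransition W) (hirr : IsIrred W)
    (hPD : IsPerronData W g φ v) (hφ2 : ContDiff ℝ 2 φ)
    (hvdiff : ∀ x, Differentiable ℝ (fun t => v t x))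
    (hstat : ∀ t : ℝ, IsStationaryDistr (expFam W g φ v t) (P1 t)) (θ : ℝ) :
    deriv (deriv φ) θ = ∑ x', P1 θ x' * ∑ x, expFam W g φ v θ x x'
      * ((fun x x' => g x x' - deriv φ θ + hfun v θ x - hfun v θ x') x x') ^ 2 := by
  have hφd : Differentiable ℝ φ := hφ2.differentiable (by norm_num)
  set M := expFam W g φ v θ with hM
  set P := P1 θ with hP
  set μ := deriv φ θ with hμ
  set r : X → X → ℝ := fun x x' => g x x' - μ + hfun v θ x - hfun v θ x' with hr
  set P' : X → ℝ := fun x => deriv (fun t => P1 t x) θ with hP'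
  have hP1d : ∀ x, HasDerivAt (fun t => P1 t x) (P' x) θ := fun x =>
    ((P1_differentiable hW hirr hPD hφd hvdiff hstat x) θ).hasDerivAt
  -- μfun and its derivative
  set μfun : ℝ → ℝ := fun t => ∑ x', P1 t x' * ∑ x, expFam W g φ v t x x' * g x x' with hμf
  have hφ'eq : deriv φ = μfun :=
    funext fun t => (stat_mean hPD hφd hvdiff t (hstat t)).symm
  have inner : ∀ x' : X, HasDerivAt (fun t => ∑ x, expFam W g φ v t x x' * g x x')
      (∑ x, M x x' * r x x' * g x x') θ := by
    intro x'
    apply HasDerivAt.fun_sum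
    intro x _
    exact (entry_hasDerivAt hPD hφd hvdiff θ x x').mul_const (g x x')
  have Hmu : HasDerivAt μfun
      (∑ x', (P' x' * (∑ x, M x x' * g x x') + P x' * (∑ x, M x x' * r x x' * g x x'))) θ := by
    apply HasDerivAt.fun_sum
    intro x' _
    exact (hP1d x').mul (inner x')
  have hd2 : deriv (deriv φ) θ
      = ∑ x', (P' x' * (∑ x, M x x' * g x x') + P x' * (∑ x, M x x' * r x x' * g x x')) := by
    rw [hφ'eq]
    exact Hmu.deriv
  -- hypotheses for the algebraic identity
  have hpoisson : ∀ x', (∑ x, M x x' * g x x') = μ + hfun v θ x' - ∑ x, M x x' * hfun v θ x := by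
    intro x'
    have := poisson hPD hφd hvdiff θ x'
    rw [hM]
    linarith [this]
  have hr0 : ∀ x', ∑ x, M x x' * r x x' = 0 := by
    intro x'
    have hcs : ∑ x, M x x' = 1 := expFam_colsum hPD θ x'
    have expand : ∑ x, M x x' * r x x'
        = (∑ x, M x x' * g x x') + (∑ x, M x x' * hfun v θ x)
          - μ * (∑ x, M x x') - hfun v θ x' * (∑ x, M x x') := by
      rw [Finset.mul_sum, Finset.mul_sum, ← Finset.sum_add_distrib,
        ← Finset.sum_sub_distrib, ← Finset.sum_sub_distrib]
      apply Finset.sum_congr rfl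
      intro x _
      rw [hr]
      ring
    rw [expand, hpoisson x', hcs]
    ring
  have hP'sum : ∑ x, P' x = 0 := by
    have hs : HasDerivAt (fun t => ∑ x, P1 t x) (∑ x, P' x) θ :=
      HasDerivAt.fun_sum (fun x _ => hP1d x)
    have hconst : (fun t => ∑ x, P1 t x) = fun _ => (1:ℝ) :=
      funext fun t => (hstat t).2.1
    rw [hconst] at hs
    exact hs.unique (hasDerivAt_const _ _)
  have hP'fix : ∀ x, (∑ x', (M x x' * r x x' * P x' + M x x' * P' x')) = P' x := by
    intro x
    have hfuneq : (fun t => ∑ x', expFam W g φ v t x x' * P1 t x') = fun t => P1 t x := by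
      funext t
      have := congrFun (hstat t).2.2 x
      simpa [Matrix.mulVec, dotProduct] using this
    have hlhs : HasDerivAt (fun t => ∑ x', expFam W g φ v t x x' * P1 t x')
        (∑ x', (M x x' * r x x' * P x' + M x x' * P' x')) θ := by
      apply HasDerivAt.fun_sum
      intro x' _
      exact (entry_hasDerivAt hPD hφd hvdiff θ x x').mul (hP1d x')
    rw [hfuneq] at hlhs
    exact hlhs.unique (hP1d x)
  rw [hd2]
  exact V_eq_sigma2 (fun x x' => rfl) hr0 hP'sum hP'fix hpoisson

end Deriv2

section Final
variable {X : Type*} [Fintype X] [DecidableEq X]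
  {W : Matrix X X ℝ} {g : X → X → ℝ} {φ : ℝ → ℝ} {v : ℝ → X → ℝ} {P1 : ℝ → X → ℝ}

lemma r_zero_mean (hPD : IsPerronData W g φ v) (hφd : Differentiable ℝ φ)
    (hvdiff : ∀ x, Differentiable ℝ (fun t => v t x)) (θ : ℝ) (x' : X) :
    ∑ x, expFam W g φ v θ x x'
      * (g x x' - deriv φ θ + hfun v θ x - hfun v θ x') = 0 := by
  have hp := poisson hPD hφd hvdiff θ x'
  have hcs : ∑ x, expFam W g φ v θ x x' = 1 := expFam_colsum hPD θ x'
  have expand : ∑ x, expFam W g φ v θ x x'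
        * (g x x' - deriv φ θ + hfun v θ x - hfun v θ x')
      = (∑ x, expFam W g φ v θ x x' * g x x')
        + (∑ x, expFam W g φ v θ x x' * hfun v θ x)
        - deriv φ θ * (∑ x, expFam W g φ v θ x x')
        - hfun v θ x' * (∑ x, expFam W g φ v θ x x') := by
    rw [Finset.mul_sum, Finset.mul_sum, ← Finset.sum_add_distrib,
      ← Finset.sum_sub_distrib, ← Finset.sum_sub_distrib]
    apply Finset.sum_congr rfl
    intro x _
    ring
  rw [expand, hcs]
  linarith [hp]

theorem chain_variance_asymptotics' (hW : IsTransition W) (hirr : IsIrred W)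
    (hPD : IsPerronData W g φ v)
    (hstat : ∀ θ : ℝ, IsStationaryDistr (expFam W g φ v θ) (P1 θ))
    (hφsmooth : ContDiff ℝ 2 φ)
    (hvdiff : ∀ x, Differentiable ℝ (fun t => v t x))
    (θ : ℝ) :
    (∃ C : ℝ, ∀ n : ℕ, 1 ≤ n →
      |chainVar (expFam W g φ v θ) (P1 θ) g n / n - deriv (deriv φ) θ|
        ≤ C / Real.sqrt n)
    ∧ Filter.Tendsto (fun n : ℕ => chainVar (expFam W g φ v θ) (P1 θ) g n / n)
        Filter.atTop (nhds (deriv (deriv φ) θ)) := by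
  have hφd : Differentiable ℝ φ := hφsmooth.differentiable (by norm_num)
  set M := expFam W g φ v θ with hM
  set P := P1 θ with hP
  set μ := deriv φ θ with hμ
  set hh : X → ℝ := hfun v θ with hhh
  set r : X → X → ℝ := fun x x' => g x x' - μ + hh x - hh x' with hrdef
  set σ2 : ℝ := ∑ a, P a * ∑ y, M y a * (r y a) ^ 2 with hσ2def
  set K : ℝ := (2 * ∑ x, |hh x|) ^ 2 with hKdef
  set C : ℝ := 2 * Real.sqrt (σ2 * K) + K with hCdef
  obtain ⟨hP0, hP1, hMP⟩ := hstat θ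
  have hM0 : ∀ x x', 0 ≤ M x x' := expFam_nonneg hW.1 hPD θ
  have hM1 : ∀ x', ∑ x, M x x' = 1 := expFam_colsum hPD θ
  have hr0 : ∀ x', ∑ x, M x x' * r x x' = 0 := fun x' =>
    r_zero_mean hPD hφd hvdiff θ x'
  have hσ2 : deriv (deriv φ) θ = σ2 :=
    deriv2_eq_sigma2 hW hirr hPD hφsmooth hvdiff hstat θ
  have hσ2nn : 0 ≤ σ2 :=
    Finset.sum_nonneg fun a _ => mul_nonneg (hP0 a)
      (Finset.sum_nonneg fun y _ => mul_nonneg (hM0 y a) (sq_nonneg _))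
  have hKnn : 0 ≤ K := sq_nonneg _
  have hsKnn : 0 ≤ Real.sqrt (σ2 * K) := Real.sqrt_nonneg _
  have hCnn : 0 ≤ C := by rw [hCdef]; positivity
  -- the main estimate
  have main : ∀ n : ℕ, 1 ≤ n →
      |chainVar M P g n / n - deriv (deriv φ) θ| ≤ C / Real.sqrt n := by
    intro n hn
    have hb := var_bound hM0 hM1 hP0 hP1 hMP (fun x x' => rfl) hr0 n
    rw [← hσ2def, ← hKdef] at hb
    have hn0 : (0:ℝ) < n := by exact_mod_cast hn
    have hn1 : (1:ℝ) ≤ n := by exact_mod_cast hn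
    have hsn : 0 < Real.sqrt n := Real.sqrt_pos.mpr hn0
    have hss : Real.sqrt n * Real.sqrt n = (n:ℝ) := Real.mul_self_sqrt hn0.le
    have hsle : Real.sqrt n ≤ (n:ℝ) := by
      calc Real.sqrt n ≤ Real.sqrt ((n:ℝ)^2) := Real.sqrt_le_sqrt (by nlinarith)
        _ = n := Real.sqrt_sq hn0.le
    have hrw : chainVar M P g n / n - deriv (deriv φ) θ
        = (chainVar M P g n - n * σ2) / n := by
      rw [hσ2]
      field_simp
    rw [hrw, abs_div, abs_of_pos hn0]
    calc |chainVar M P g n - n * σ2| / n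
        ≤ (2 * (Real.sqrt n * Real.sqrt (σ2 * K)) + K) / n := by
          gcongr
      _ ≤ C / Real.sqrt n := by
          rw [div_le_div_iff₀ hn0 hsn, hCdef]
          nlinarith [mul_le_mul_of_nonneg_left hsle hKnn, hss, hsKnn]
  refine ⟨⟨C, fun n hn => main n hn⟩, ?_⟩
  -- convergence
  have hsq : Filter.Tendsto (fun n : ℕ => Real.sqrt n) Filter.atTop Filter.atTop := by
    apply Filter.tendsto_atTop_atTop.mpr
    intro b
    refine ⟨⌈b^2⌉₊, fun n hn => ?_⟩
    have hb2 : (b^2 : ℝ) ≤ n := le_trans (Nat.le_ceil _) (by exact_mod_cast hn)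
    calc b ≤ |b| := le_abs_self b
      _ = Real.sqrt (b^2) := (Real.sqrt_sq_eq_abs b).symm
      _ ≤ Real.sqrt n := Real.sqrt_le_sqrt hb2
  have hCn : Filter.Tendsto (fun n : ℕ => C / Real.sqrt n) Filter.atTop (nhds 0) :=
    Filter.Tendsto.div_atTop tendsto_const_nhds hsq
  have hzero : Filter.Tendsto
      (fun n : ℕ => chainVar M P g n / n - deriv (deriv φ) θ) Filter.atTop (nhds 0) := by
    apply squeeze_zero_norm'
    · filter_upwards [Filter.eventually_ge_atTop 1] with n hn
      exact main n hn
    · exact hCn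
  have := hzero.add_const (deriv (deriv φ) θ)
  simpa using this

end Final


/-- `Var_θ[g^n(X^{n+1})/n] = φ''(θ)/n + O(n^{-3/2})`; equivalently
`|Var_θ[S_n]/n - φ''(θ)| ≤ C/√n`, and in particular
`n·Var_θ[g^n(X^{n+1})/n] = Var_θ[S_n]/n → φ''(θ)`. -/
theorem chain_variance_asymptotics {X : Type*} [Fintype X] [DecidableEq X]
    (W : Matrix X X ℝ) (g : X → X → ℝ)
    (hW : IsTransition W) (hirr : IsIrred W)
    (φ : ℝ → ℝ) (v : ℝ → X → ℝ) (hPD : IsPerronData W g φ v)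
    (P1 : ℝ → X → ℝ) (hstat : ∀ θ : ℝ, IsStationaryDistr (expFam W g φ v θ) (P1 θ))
    (hφsmooth : ContDiff ℝ 2 φ)
    (hvdiff : ∀ x, Differentiable ℝ (fun t => v t x))
    (θ : ℝ) :
    (∃ C : ℝ, ∀ n : ℕ, 1 ≤ n →
      |chainVar (expFam W g φ v θ) (P1 θ) g n / n - deriv (deriv φ) θ|
        ≤ C / Real.sqrt n)
    ∧ Filter.Tendsto (fun n : ℕ => chainVar (expFam W g φ v θ) (P1 θ) g n / n)
        Filter.atTop (nhds (deriv (deriv φ) θ)) := by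
  exact chain_variance_asymptotics' hW hirr hPD hstat hφsmooth hvdiff θ
end

section
/- Let W be an irreducible transition matrix on finite X and suppose Σ_j θ'^j g_j(x,x') − Σ_j θ^j g_j(x,x') = f(x) − f(x') + C for all (x,x') in the support of W, for some f : X → ℝ and constant C. Then the corresponding exponential-family transition matrices coincide: W_{θ'} = W_θ. Conversely, if the parametrization θ ↦ W_θ fails to be injective, such a relation f, C exists; i.e., the parametrization is faithful if and only if the generators {g_j} are linearly independent modulo functions of the form (x,x') ↦ f(x) − f(x') + c on the support of W. -/
open Matrix Real

/-- The multi-parameter tilted matrix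
`W̄_θ(x|x') = W(x|x')·exp(Σ_j θ^j g_j(x,x'))`. -/
noncomputable def tiltedM {X : Type*} [Fintype X] {d : ℕ} (W : Matrix X X ℝ)
    (g : Fin d → X → X → ℝ) (θ : Fin d → ℝ) : Matrix X X ℝ :=
  Matrix.of fun x x' => W x x' * Real.exp (∑ j, θ j * g j x x')

/-- The multi-parameter exponential family
`W_θ(x|x') = λ_θ⁻¹·v_θ(x)·W̄_θ(x|x')·v_θ(x')⁻¹`. -/
noncomputable def expFamM {X : Type*} [Fintype X] {d : ℕ} (W : Matrix X X ℝ)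
    (g : Fin d → X → X → ℝ) (φ : (Fin d → ℝ) → ℝ) (v : (Fin d → ℝ) → X → ℝ)
    (θ : Fin d → ℝ) : Matrix X X ℝ :=
  Matrix.of fun x x' =>
    (Real.exp (φ θ))⁻¹ * v θ x * (W x x' * Real.exp (∑ j, θ j * g j x x')) * (v θ x')⁻¹

/-- `φ` and `v` are the Perron data of the tilted matrices: `v_θ` is a positive
eigenvector of `W̄_θᵀ` with eigenvalue `e^{φ(θ)}`. -/
def IsPerronDataM {X : Type*} [Fintype X] {d : ℕ} (W : Matrix X X ℝ)
    (g : Fin d → X → X → ℝ) (φ : (Fin d → ℝ) → ℝ) (v : (Fin d → ℝ) → X → ℝ) : Prop :=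
  ∀ θ : Fin d → ℝ, (∀ x, 0 < v θ x) ∧
    (tiltedM W g θ)ᵀ *ᵥ v θ = Real.exp (φ θ) • v θ

/- ## Auxiliary lemmas -/

lemma sum_pos_iff_aux {ι : Type*} {s : Finset ι} {f : ι → ℝ} (h : ∀ i ∈ s, 0 ≤ f i) :
    0 < ∑ i ∈ s, f i ↔ ∃ i ∈ s, 0 < f i := by
  constructor
  · intro hp
    by_contra hc
    push_neg at hc
    have : ∑ i ∈ s, f i = 0 := Finset.sum_eq_zero fun i hi => le_antisymm (hc i hi) (h i hi)
    simp [this] at hp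
  · rintro ⟨i, hi, hfi⟩
    exact Finset.sum_pos' h ⟨i, hi, hfi⟩

lemma pow_entry_nonneg_aux {X : Type*} [Fintype X] [DecidableEq X] {M : Matrix X X ℝ}
    (h : ∀ x y, 0 ≤ M x y) : ∀ n x y, 0 ≤ (M ^ n) x y := by
  intro n
  induction n with
  | zero => intro x y; simp [Matrix.one_apply]; split <;> norm_num
  | succ n ih =>
    intro x y
    rw [pow_succ, Matrix.mul_apply]
    exact Finset.sum_nonneg fun z _ => mul_nonneg (ih x z) (h z y)

lemma pattern_pow_aux {X : Type*} [Fintype X] [DecidableEq X] {A B : Matrix X X ℝ}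
    (hA : ∀ x y, 0 ≤ A x y) (hB : ∀ x y, 0 ≤ B x y)
    (h : ∀ x y, 0 < A x y ↔ 0 < B x y) :
    ∀ n x y, 0 < (A ^ n) x y ↔ 0 < (B ^ n) x y := by
  intro n
  induction n with
  | zero => intro x y; simp
  | succ n ih =>
    intro x y
    rw [pow_succ, pow_succ, Matrix.mul_apply, Matrix.mul_apply,
      sum_pos_iff_aux (fun z _ => mul_nonneg (pow_entry_nonneg_aux hA n x z) (hA z y)),
      sum_pos_iff_aux (fun z _ => mul_nonneg (pow_entry_nonneg_aux hB n x z) (hB z y))]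
    constructor
    · rintro ⟨z, hz, hp⟩
      have h1 : 0 < (A ^ n) x z := lt_of_le_of_ne (pow_entry_nonneg_aux hA n x z)
        (fun e => by simp [← e] at hp)
      have h2 : 0 < A z y := lt_of_le_of_ne (hA z y) (fun e => by simp [← e] at hp)
      exact ⟨z, hz, mul_pos ((ih x z).mp h1) ((h z y).mp h2)⟩
    · rintro ⟨z, hz, hp⟩
      have h1 : 0 < (B ^ n) x z := lt_of_le_of_ne (pow_entry_nonneg_aux hB n x z)
        (fun e => by simp [← e] at hp)
      have h2 : 0 < B z y := lt_of_le_of_ne (hB z y) (fun e => by simp [← e] at hp)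
      exact ⟨z, hz, mul_pos ((ih x z).mpr h1) ((h z y).mpr h2)⟩

lemma pow_mulVec_eig_aux {X : Type*} [Fintype X] [DecidableEq X] {M : Matrix X X ℝ}
    {r : ℝ} {z : X → ℝ} (h : M *ᵥ z = r • z) : ∀ n, (M ^ n) *ᵥ z = r ^ n • z := by
  intro n
  induction n with
  | zero => simp
  | succ n ih =>
    rw [pow_succ, ← Matrix.mulVec_mulVec, h, Matrix.mulVec_smul, ih, pow_succ]
    rw [smul_smul, mul_comm r]

lemma perron_le_aux {X : Type*} [Fintype X] [DecidableEq X] [Nonempty X] {M : Matrix X X ℝ}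
    (hM : ∀ x y, 0 ≤ M x y) {r s : ℝ} {u w : X → ℝ}
    (hu : ∀ x, 0 < u x) (hw : ∀ x, 0 < w x)
    (hMu : M *ᵥ u = r • u) (hMw : M *ᵥ w = s • w) : r ≤ s := by
  obtain ⟨x0, -, hx0⟩ := Finset.exists_max_image Finset.univ (fun x => u x / w x)
    ⟨Classical.arbitrary X, Finset.mem_univ _⟩
  set t := u x0 / w x0 with ht
  have hub : ∀ x, u x ≤ t * w x := fun x => by
    have := hx0 x (Finset.mem_univ x)
    rw [div_le_div_iff₀ (hw x) (hw x0)] at this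
    rw [ht, div_mul_eq_mul_div, le_div_iff₀ (hw x0)]
    linarith [this]
  have h1 : r * u x0 ≤ s * u x0 := by
    have e1 : (M *ᵥ u) x0 = r * u x0 := by rw [hMu]; simp
    have e2 : (M *ᵥ w) x0 = s * w x0 := by rw [hMw]; simp
    have : (M *ᵥ u) x0 ≤ t * (M *ᵥ w) x0 := by
      simp only [Matrix.mulVec, dotProduct, Finset.mul_sum]
      exact Finset.sum_le_sum fun y _ => by
        have := mul_le_mul_of_nonneg_left (hub y) (hM x0 y)
        nlinarith [this]
    rw [e1, e2] at this
    have htw : t * w x0 = u x0 := div_mul_cancel₀ _ (ne_of_gt (hw x0))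
    have e3 : t * (s * w x0) = s * u x0 := by rw [← htw]; ring
    linarith [this, e3]
  exact le_of_mul_le_mul_right h1 (hu x0)

lemma perron_unique_aux {X : Type*} [Fintype X] [DecidableEq X] [Nonempty X] {M : Matrix X X ℝ}
    (hM : ∀ x y, 0 ≤ M x y) (hirr : ∀ x y, ∃ n, 0 < (M ^ n) x y)
    {r s : ℝ} {u w : X → ℝ} (hr : 0 < r)
    (hu : ∀ x, 0 < u x) (hw : ∀ x, 0 < w x)
    (hMu : M *ᵥ u = r • u) (hMw : M *ᵥ w = s • w) :
    r = s ∧ ∃ t : ℝ, 0 < t ∧ u = t • w := by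
  have hrs : r = s := le_antisymm (perron_le_aux hM hu hw hMu hMw)
    (perron_le_aux hM hw hu hMw hMu)
  subst hrs
  obtain ⟨x0, -, hx0⟩ := Finset.exists_max_image Finset.univ (fun x => u x / w x)
    ⟨Classical.arbitrary X, Finset.mem_univ _⟩
  set t := u x0 / w x0 with ht
  have htpos : 0 < t := div_pos (hu x0) (hw x0)
  have hub : ∀ x, u x ≤ t * w x := fun x => by
    have := hx0 x (Finset.mem_univ x)
    rw [div_le_div_iff₀ (hw x) (hw x0)] at this
    rw [ht, div_mul_eq_mul_div, le_div_iff₀ (hw x0)]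
    linarith [this]
  set z : X → ℝ := fun x => t * w x - u x with hz
  have hznn : ∀ x, 0 ≤ z x := fun x => by simp [hz]; linarith [hub x]
  have hz0 : z x0 = 0 := by
    simp [hz, ht, div_mul_cancel₀ _ (ne_of_gt (hw x0))]
  have hMz : M *ᵥ z = r • z := by
    have : z = t • w - u := by funext x; simp [hz]
    rw [this, Matrix.mulVec_sub, Matrix.mulVec_smul, hMw, hMu, smul_comm]
    funext x; simp; ring
  have hzero : ∀ x, z x = 0 := by
    intro x
    obtain ⟨n, hn⟩ := hirr x0 x
    have := pow_mulVec_eig_aux hMz n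
    have hsum : ∑ y, (M ^ n) x0 y * z y = 0 := by
      have e : ((M ^ n) *ᵥ z) x0 = r ^ n * z x0 := by rw [this]; simp
      simpa [Matrix.mulVec, dotProduct, hz0] using e
    have := (Finset.sum_eq_zero_iff_of_nonneg
      (fun y _ => mul_nonneg (pow_entry_nonneg_aux hM n x0 y) (hznn y))).mp hsum x
      (Finset.mem_univ x)
    rcases mul_eq_zero.mp this with h | h
    · exact absurd h (ne_of_gt hn)
    · exact h
  refine ⟨rfl, t, htpos, ?_⟩
  funext x
  have := hzero x
  simp [hz] at this
  simp
  linarith [this]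

/-- the parametrization `θ ↦ W_θ` identifies `θ` and `θ'` exactly
when `Σ_j θ'^j g_j − Σ_j θ^j g_j` is of the form `f(x) − f(x') + C` on the
support of `W`; i.e. it is faithful iff the generators are linearly independent
modulo such functions. -/
theorem expFam_faithfulness {X : Type*} [Fintype X] [DecidableEq X] {d : ℕ}
    (W : Matrix X X ℝ) (g : Fin d → X → X → ℝ)
    (hW : IsTransition W) (hirr : IsIrred W)
    (φ : (Fin d → ℝ) → ℝ) (v : (Fin d → ℝ) → X → ℝ)
    (hPD : IsPerronDataM W g φ v) :
    (∀ (θ θ' : Fin d → ℝ) (f : X → ℝ) (C : ℝ),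
      (∀ x x', 0 < W x x' →
        (∑ j, θ' j * g j x x') - (∑ j, θ j * g j x x') = f x - f x' + C) →
      expFamM W g φ v θ' = expFamM W g φ v θ)
    ∧ (∀ θ θ' : Fin d → ℝ, expFamM W g φ v θ' = expFamM W g φ v θ →
        ∃ (f : X → ℝ) (C : ℝ), ∀ x x', 0 < W x x' →
          (∑ j, θ' j * g j x x') - (∑ j, θ j * g j x x') = f x - f x' + C) := by
  constructor
  · intro θ θ' f C h
    cases isEmpty_or_nonempty X with
    | inl hE => ext x x'; exact (IsEmpty.false x).elim
    | inr hN =>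
      obtain ⟨hvθ, heθ⟩ := hPD θ
      obtain ⟨hvθ', heθ'⟩ := hPD θ'
      set w : X → ℝ := fun x => v θ x * Real.exp (-(f x)) with hwdef
      have hwpos : ∀ x, 0 < w x := fun x => mul_pos (hvθ x) (Real.exp_pos _)
      have hkey : (tiltedM W g θ')ᵀ *ᵥ w = Real.exp (φ θ + C) • w := by
        funext x'
        have step : ∀ x, (tiltedM W g θ')ᵀ x' x * w x
            = Real.exp C * Real.exp (-(f x')) * ((tiltedM W g θ)ᵀ x' x * v θ x) := by
          intro x
          simp only [Matrix.transpose_apply, tiltedM, Matrix.of_apply, hwdef]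
          by_cases h0 : 0 < W x x'
          · have e2 : (∑ j, θ' j * g j x x')
                = (∑ j, θ j * g j x x') + (f x - f x' + C) := by
              linarith [h x x' h0]
            rw [e2, Real.exp_add]
            have key : Real.exp (f x - f x' + C) * Real.exp (-(f x))
                = Real.exp C * Real.exp (-(f x')) := by
              rw [← Real.exp_add, ← Real.exp_add]; congr 1; ring
            linear_combination (W x x' * Real.exp (∑ j, θ j * g j x x') * v θ x) * key
          · have hz : W x x' = 0 := le_antisymm (not_lt.mp h0) (hW.1 x x')
            rw [hz]; ring
        calc ((tiltedM W g θ')ᵀ *ᵥ w) x'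
            = ∑ x, Real.exp C * Real.exp (-(f x')) * ((tiltedM W g θ)ᵀ x' x * v θ x) :=
              Finset.sum_congr rfl (fun x _ => step x)
          _ = Real.exp C * Real.exp (-(f x')) * ((tiltedM W g θ)ᵀ *ᵥ v θ) x' := by
              rw [show ((tiltedM W g θ)ᵀ *ᵥ v θ) x'
                  = ∑ x, (tiltedM W g θ)ᵀ x' x * v θ x from rfl, Finset.mul_sum]
          _ = (Real.exp (φ θ + C) • w) x' := by
              rw [heθ]; simp [hwdef, Real.exp_add]; ring
      have hMnn : ∀ x y, 0 ≤ (tiltedM W g θ')ᵀ x y := fun x y =>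
        mul_nonneg (hW.1 y x) (Real.exp_pos _).le
      have hMirr : ∀ x y, ∃ n, 0 < ((tiltedM W g θ')ᵀ ^ n) x y := by
        intro x y
        obtain ⟨n, hn⟩ := hirr y x
        refine ⟨n, ?_⟩
        have hpat := pattern_pow_aux (B := Wᵀ) hMnn (fun a b => hW.1 b a)
          (fun a b => ?_) n x y
        · rw [hpat]
          have : (Wᵀ ^ n) x y = (W ^ n) y x := by
            rw [← Matrix.transpose_pow]; rfl
          rw [this]; exact hn
        · show 0 < (tiltedM W g θ')ᵀ a b ↔ 0 < Wᵀ a b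
          simp only [Matrix.transpose_apply, tiltedM, Matrix.of_apply]
          constructor
          · intro hp
            rcases (hW.1 b a).lt_or_eq with h' | h'
            · exact h'
            · rw [← h'] at hp; simp at hp
          · intro hp; exact mul_pos hp (Real.exp_pos _)
      obtain ⟨hrs, t, htpos, hvt⟩ := perron_unique_aux hMnn hMirr
        (Real.exp_pos (φ θ')) hvθ' hwpos heθ' hkey
      ext x x'
      simp only [expFamM, Matrix.of_apply]
      by_cases h0 : 0 < W x x'
      · have e2 : (∑ j, θ' j * g j x x')
            = (∑ j, θ j * g j x x') + (f x - f x' + C) := by linarith [h x x' h0]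
        have hv1 : v θ' x = t * (v θ x * Real.exp (-(f x))) := by
          rw [hvt]; rfl
        have hv2 : v θ' x' = t * (v θ x' * Real.exp (-(f x'))) := by
          rw [hvt]; rfl
        rw [hrs, hv1, hv2, e2]
        rw [Real.exp_add, Real.exp_add, Real.exp_add, Real.exp_sub, Real.exp_neg,
          Real.exp_neg]
        have h1 := (hvθ x').ne'
        have h2 := htpos.ne'
        field_simp
      · have hz : W x x' = 0 := le_antisymm (not_lt.mp h0) (hW.1 x x')
        rw [hz]; ring
  · intro θ θ' heq
    obtain ⟨hvθ, -⟩ := hPD θ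
    obtain ⟨hvθ', -⟩ := hPD θ'
    refine ⟨fun x => Real.log (v θ x) - Real.log (v θ' x), φ θ' - φ θ, ?_⟩
    intro x x' hpos
    have hE := congrFun (congrFun heq x) x'
    simp only [expFamM, Matrix.of_apply] at hE
    have key : Real.exp ((∑ j, θ' j * g j x x') - (∑ j, θ j * g j x x'))
        = Real.exp ((Real.log (v θ x) - Real.log (v θ' x))
          - (Real.log (v θ x') - Real.log (v θ' x')) + (φ θ' - φ θ)) := by
      rw [Real.exp_sub, Real.exp_add, Real.exp_sub, Real.exp_sub, Real.exp_sub,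
        Real.exp_sub, Real.exp_log (hvθ x), Real.exp_log (hvθ' x),
        Real.exp_log (hvθ x'), Real.exp_log (hvθ' x')]
      have h1 := (hvθ x).ne'
      have h2 := (hvθ' x).ne'
      have h3 := (hvθ x').ne'
      have h4 := (hvθ' x').ne'
      have h5 := hpos.ne'
      have h6 := (Real.exp_pos (φ θ)).ne'
      have h7 := (Real.exp_pos (φ θ')).ne'
      have h8 := (Real.exp_pos (∑ j, θ j * g j x x')).ne'
      field_simp at hE
      have hE' : v θ' x * Real.exp (∑ j, θ' j * g j x x') * (Real.exp (φ θ) * v θ x')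
          = v θ x * Real.exp (∑ j, θ j * g j x x') * (Real.exp (φ θ') * v θ' x') := by
        apply mul_left_cancel₀ h5
        linear_combination W x x' * hE
      field_simp
      linear_combination hE'
    exact Real.exp_eq_exp.mp key
end
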